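/- arXiv:2106.07215 — 2 statements merged into one kernel-verified Lean document; each statement's English description precedes it below -/
import Mathlib

section
/- Let p be an odd prime and let γ be a p-core. The p(p+3)/2 partitions ⟨i,j⟩ for 0 ≤ i < j ≤ p−1, ⟨i⟩ for 0 ≤ i ≤ p−1, and ⟨i²⟩ for 0 ≤ i ≤ p−1 are pairwise distinct, and they are precisely the partitions of |γ| + 2p whose p-core is γ. -/
namespace ArxivW2

/-- A partition of a natural number, given by its (weakly decreasing, finitely
supported) sequence of parts, `part i` being the `(i+1)`-st part. -/
structure PartitionNat : Type where
  part : ℕ → ℕ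
  antitone : Antitone part
  finite_support : (Function.support part).Finite

namespace PartitionNat

/-- The rank `|λ|` of a partition: the sum of its parts. -/
noncomputable def size (μ : PartitionNat) : ℕ := ∑ᶠ i, μ.part i

/-- The number of nonzero parts of a partition. -/
noncomputable def len (μ : PartitionNat) : ℕ := (Function.support μ.part).ncard

/-- The `(j+1)`-st part of the conjugate partition: `λ'_{j+1} = #{i : λ_i ≥ j+1}`. -/
noncomputable def conj (μ : PartitionNat) (j : ℕ) : ℕ := {i : ℕ | j + 1 ≤ μ.part i}.ncard

/-- A partition is self-conjugate if it equals its conjugate. -/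
def SelfConj (μ : PartitionNat) : Prop := ∀ j, μ.part j = μ.conj j

/-- `(i, j)` (0-indexed) is a node of the Young diagram of `μ`. -/
def IsNode (μ : PartitionNat) (i j : ℕ) : Prop := j < μ.part i

/-- The hook length of the (0-indexed) node `(i,j)`:
`h = λ_{i+1} + λ'_{j+1} − (i+1) − (j+1) + 1`. -/
noncomputable def hook (μ : PartitionNat) (i j : ℕ) : ℕ := μ.part i + μ.conj j - (i + j + 1)

/-- A partition is a `p`-core if no hook length of a node is divisible by `p`. -/
def IsCore (p : ℕ) (μ : PartitionNat) : Prop := ∀ i j, μ.IsNode i j → ¬ p ∣ μ.hook i j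

/-- The `p`-weight of a partition: the number of nodes whose hook length is
divisible by `p`. -/
noncomputable def pweight (p : ℕ) (μ : PartitionNat) : ℕ :=
  {x : ℕ × ℕ | μ.IsNode x.1 x.2 ∧ p ∣ μ.hook x.1 x.2}.ncard

/-- The `N`-bead beta-set `B_N(λ) = {λ_i + N − i : 1 ≤ i ≤ N}` of a partition
(meaningful when `N ≥ len λ`). -/
def betaSet (N : ℕ) (μ : PartitionNat) : Finset ℕ :=
  (Finset.range N).image fun i => μ.part i + (N - 1 - i)

/-- A partition is `p`-regular if no nonzero part is repeated `p` or more times. -/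
def Regular (p : ℕ) (μ : PartitionNat) : Prop :=
  ∀ i, μ.part i ≠ 0 → μ.part (i + p - 1) < μ.part i

end PartitionNat

open PartitionNat

/-- `γ` is the `p`-core of `lam`: `γ` is a `p`-core, and for some `N` at least the
number of parts of both, the `N`-bead beta-sets of `lam` and `γ` have the same number
of elements in each residue class mod `p`. -/
def HasCore (p : ℕ) (lam gam : PartitionNat) : Prop :=
  IsCore p gam ∧ ∃ N : ℕ, lam.len ≤ N ∧ gam.len ≤ N ∧ ∀ r : ℕ,
    ((betaSet N lam).filter fun b => b % p = r).card =
      ((betaSet N gam).filter fun b => b % p = r).card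

/-- Membership in the `p`-block of weight `w` with `p`-core `gam`. -/
def InBlock (p w : ℕ) (gam lam : PartitionNat) : Prop :=
  lam.size = gam.size + w * p ∧ HasCore p lam gam

/-- The dominance order: `lam ⊴ mu`. -/
def Dom (lam mu : PartitionNat) : Prop :=
  ∀ k : ℕ, ∑ i ∈ Finset.range k, lam.part i ≤ ∑ i ∈ Finset.range k, mu.part i

/-- `mu` is obtained from `lam` by removing a `p`-rim-hook of leg length `l`. -/
def RemoveHook (p : ℕ) (lam mu : PartitionNat) (l : ℕ) : Prop :=
  ∃ N b : ℕ, lam.len ≤ N ∧ mu.len ≤ N ∧ b ∈ betaSet N lam ∧ p ≤ b ∧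
    b - p ∉ betaSet N lam ∧
    betaSet N mu = insert (b - p) (betaSet N lam \ {b}) ∧
    l = ((betaSet N lam).filter fun x => b - p < x ∧ x < b).card

/-- `lam` belongs to the set `∂_l` of the weight-2 block of `gam`:
it lies in the block and some (equivalently, every) two-step `p`-rim-hook removal
sequence from `lam` down to `gam` has leg lengths `l₁, l₂` with `|l₁ − l₂| = l`. -/
def DelClass (p : ℕ) (gam : PartitionNat) (l : ℕ) (lam : PartitionNat) : Prop :=
  InBlock p 2 gam lam ∧ ∃ mu l1 l2, RemoveHook p lam mu l1 ∧ RemoveHook p mu gam l2 ∧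
    max l1 l2 - min l1 l2 = l

/-- `ρ 0 < ρ 1 < ⋯ < ρ (p−1)` is the increasing enumeration of the maxima of the
residue classes mod `p` in the `N`-bead beta-set of `gam`. -/
def IsRho (p N : ℕ) (gam : PartitionNat) (ρ : ℕ → ℕ) : Prop :=
  (∀ i j, i < j → j < p → ρ i < ρ j) ∧
  (∀ i, i < p → ρ i ∈ betaSet N gam ∧ ∀ b ∈ betaSet N gam, b % p = ρ i % p → b ≤ ρ i) ∧
  (∀ r, r < p → ∃ i, i < p ∧ ρ i % p = r)

/-- The beta-set of the partition `⟨i,j⟩` (`i < j`). -/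
def pairBeta (p : ℕ) (B : Finset ℕ) (ρ : ℕ → ℕ) (i j : ℕ) : Finset ℕ :=
  (B \ {ρ i, ρ j}) ∪ {ρ i + p, ρ j + p}

/-- The beta-set of the partition `⟨i⟩`. -/
def oneBeta (p : ℕ) (B : Finset ℕ) (ρ : ℕ → ℕ) (i : ℕ) : Finset ℕ :=
  (B \ {ρ i}) ∪ {ρ i + 2 * p}

/-- The beta-set of the partition `⟨i²⟩`. -/
def sqBeta (p : ℕ) (B : Finset ℕ) (ρ : ℕ → ℕ) (i : ℕ) : Finset ℕ :=
  (B \ {ρ i - p}) ∪ {ρ i + p}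

/-- The pyramid entry `γ_{ij}` of the block, extended by `1` for `i > j` and `0`
for `j ≥ p`. -/
def pyr (p : ℕ) (ρ : ℕ → ℕ) (i j : ℕ) : ℕ :=
  if j < i then 1 else if p ≤ j then 0 else if ρ j - ρ i < p then 1 else 0

/-- The beta-set of Fayers' partition `⌈i,j⌋` (for `0 ≤ i ≤ j ≤ p−1`, `i < p−1`),
defined by cases on the pyramid entries. -/
def fayersBeta (p : ℕ) (B : Finset ℕ) (ρ : ℕ → ℕ) (i j : ℕ) : Finset ℕ :=
  if i = j then
    (if pyr p ρ (i + 1) (i + 2) = 1 then pairBeta p B ρ (i + 1) (i + 2)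
     else oneBeta p B ρ (i + 1))
  else
    if pyr p ρ i (j + 1) = 1 then pairBeta p B ρ i (j + 1)
    else if pyr p ρ i j = 1 then oneBeta p B ρ i
    else if pyr p ρ (i + 1) j = 1 then sqBeta p B ρ j
    else pairBeta p B ρ (i + 1) j

/-- The set of `p`-BG-partitions in the block of weight `w` with core `gam`:
self-conjugate partitions in the block none of whose diagonal hook lengths is
divisible by `p`. -/
def BGset (p w : ℕ) (gam : PartitionNat) : Set PartitionNat :=
  {lam | InBlock p w gam lam ∧ SelfConj lam ∧ ∀ i, lam.IsNode i i → ¬ p ∣ lam.hook i i}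


section AuxDev
open Finset PartitionNat

lemma mem_iff_lt_ncard {S : Set ℕ} (hS : ∀ ⦃i j : ℕ⦄, i ≤ j → j ∈ S → i ∈ S)
    (hfin : S.Finite) (i : ℕ) : i ∈ S ↔ i < S.ncard := by
  constructor
  · intro hi
    have h1 : (Set.Iic i) ⊆ S := fun k hk => hS hk hi
    have h2 := Set.ncard_le_ncard h1 hfin
    have h3 : (Set.Iic i).ncard = i + 1 := by
      rw [← Finset.coe_Iic, Set.ncard_coe_finset, Nat.card_Iic]
    omega
  · intro hi
    by_contra hno
    have h1 : S ⊆ Set.Iio i := by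
      intro k hk
      simp only [Set.mem_Iio]
      by_contra hk2
      push_neg at hk2
      exact hno (hS hk2 hk)
    have h2 := Set.ncard_le_ncard h1 (Set.finite_Iio i)
    have h3 : (Set.Iio i).ncard = i := by
      rw [← Finset.coe_Iio, Set.ncard_coe_finset, Nat.card_Iio]
    omega

namespace PartitionNat
variable {μ : PartitionNat} {M : ℕ}

lemma lt_conj_iff (μ : PartitionNat) (i j : ℕ) : i < μ.conj j ↔ j < μ.part i := by
  have h := mem_iff_lt_ncard (S := {i : ℕ | j + 1 ≤ μ.part i})
    (fun a b hab hb => le_trans hb (μ.antitone hab))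
    (μ.finite_support.subset (fun x hx => by
      simp only [Set.mem_setOf_eq] at hx
      simp only [Function.mem_support]
      omega)) i
  simp only [Set.mem_setOf_eq] at h
  rw [conj]
  omega

lemma conj_zero (μ : PartitionNat) : μ.conj 0 = μ.len := by
  unfold conj len
  congr 1
  ext i
  simp [Function.mem_support]
  omega

lemma lt_len_iff (μ : PartitionNat) (i : ℕ) : i < μ.len ↔ 0 < μ.part i := by
  rw [← conj_zero]; exact μ.lt_conj_iff i 0

lemma part_eq_zero (μ : PartitionNat) {i : ℕ} (h : μ.len ≤ i) : μ.part i = 0 := by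
  have := μ.lt_len_iff i; omega

lemma conj_le_len (μ : PartitionNat) (j : ℕ) : μ.conj j ≤ μ.len := by
  apply Set.ncard_le_ncard _ μ.finite_support
  intro x hx
  simp only [Set.mem_setOf_eq] at hx
  simp only [Function.mem_support]
  omega

lemma conj_anti (μ : PartitionNat) : Antitone μ.conj := by
  intro a b hab
  apply Set.ncard_le_ncard _ (μ.finite_support.subset (fun x hx => by
    simp only [Set.mem_setOf_eq] at hx
    simp only [Function.mem_support]
    omega))
  intro x hx
  simp only [Set.mem_setOf_eq] at hx ⊢
  omega

lemma mem_betaSet {b : ℕ} : b ∈ betaSet M μ ↔ ∃ i < M, μ.part i + (M - 1 - i) = b := by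
  simp [betaSet]

lemma beta_injOn (μ : PartitionNat) (M : ℕ) :
    ∀ i ∈ range M, ∀ j ∈ range M,
      μ.part i + (M - 1 - i) = μ.part j + (M - 1 - j) → i = j := by
  intro i hi j hj h
  simp only [mem_range] at hi hj
  rcases lt_trichotomy i j with hij | hij | hij
  · have := μ.antitone hij.le; omega
  · exact hij
  · have := μ.antitone hij.le; omega

lemma betaSet_card (μ : PartitionNat) (M : ℕ) : (betaSet M μ).card = M := by
  rw [betaSet, card_image_of_injOn (fun i hi j hj h => beta_injOn μ M i hi j hj h), card_range]

lemma sum_betaSet (hM : μ.len ≤ M) :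
    ∑ b ∈ betaSet M μ, b = μ.size + ∑ i ∈ range M, (M - 1 - i) := by
  rw [betaSet, sum_image (beta_injOn μ M), sum_add_distrib]
  congr 1
  rw [size, finsum_eq_finset_sum_of_support_subset]
  intro x hx
  simp only [Function.mem_support] at hx
  simp only [coe_range, Set.mem_Iio]
  have := μ.lt_len_iff x
  omega

lemma small_mem_betaSet (hM : μ.len ≤ M) {k : ℕ} (hk : k < M - μ.len) :
    k ∈ betaSet M μ := by
  rw [mem_betaSet]
  refine ⟨M - 1 - k, by omega, ?_⟩
  rw [μ.part_eq_zero (by omega)]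
  omega

/-- the `j`-th element of the complement of the beta-set -/
noncomputable def xco (M : ℕ) (μ : PartitionNat) (j : ℕ) : ℕ := M + j - μ.conj j

lemma xco_notMem (hM : μ.len ≤ M) (j : ℕ) : xco M μ j ∉ betaSet M μ := by
  intro hmem
  rw [mem_betaSet] at hmem
  obtain ⟨i, hi, heq⟩ := hmem
  have hc : μ.conj j ≤ M := le_trans (μ.conj_le_len j) hM
  have hiff := μ.lt_conj_iff i j
  rw [xco] at heq
  by_cases hij : j < μ.part i
  · have h1 : i < μ.conj j := hiff.mpr hij
    omega
  · have h1 : ¬ i < μ.conj j := fun h => hij (hiff.mp h)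
    omega

lemma xco_lt_iff (hM : μ.len ≤ M) {i : ℕ} (hi : i < M) (j : ℕ) :
    xco M μ j < μ.part i + (M - 1 - i) ↔ j < μ.part i := by
  have hc : μ.conj j ≤ M := le_trans (μ.conj_le_len j) hM
  have hiff := μ.lt_conj_iff i j
  rw [xco]
  constructor
  · intro h
    by_contra hno
    have h1 : ¬ i < μ.conj j := fun hh => hno (hiff.mp hh)
    omega
  · intro h
    have h1 : i < μ.conj j := hiff.mpr h
    omega

lemma xco_surj (hM : μ.len ≤ M) {y : ℕ} (hy : y ∉ betaSet M μ) :
    ∃ j, xco M μ j = y := by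
  classical
  have hxge : ∀ j, j ≤ xco M μ j := by
    intro j
    have := le_trans (μ.conj_le_len j) hM
    rw [xco]; omega
  have hP0 : xco M μ 0 ≤ y := by
    rw [xco, μ.conj_zero]
    by_contra hno
    exact hy (small_mem_betaSet hM (by omega))
  set P : ℕ → Prop := fun j => xco M μ j ≤ y with hPdef
  have hPd : DecidablePred P := fun j => by unfold P; infer_instance
  set j := Nat.findGreatest P y with hj
  have hPj : P j := Nat.findGreatest_spec (Nat.zero_le y) hP0
  have hnext : y < xco M μ (j + 1) := by
    by_cases hjy : j + 1 ≤ y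
    · have := Nat.findGreatest_is_greatest (lt_add_one j) hjy
      unfold P at this
      omega
    · have hle := Nat.findGreatest_le (P := P) y
      have := hxge (j + 1)
      omega
  unfold P at hPj
  rcases eq_or_lt_of_le hPj with heq | hlt
  · exact ⟨j, heq⟩
  exfalso
  -- y strictly between xco j and xco (j+1); show y ∈ betaSet
  have hcj : μ.conj j ≤ M := le_trans (μ.conj_le_len j) hM
  have hcj1 : μ.conj (j+1) ≤ μ.conj j := μ.conj_anti (by omega)
  rw [xco] at hPj hlt
  rw [xco] at hnext
  set t := y - (M + j - μ.conj j) with ht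
  have ht1 : 1 ≤ t := by omega
  have ht2 : μ.conj (j+1) + t ≤ μ.conj j := by omega
  set i := μ.conj j - t with hi
  have hiltM : i < M := by
    have : μ.conj j ≤ μ.len := μ.conj_le_len j
    omega
  have hp1 : j < μ.part i := (μ.lt_conj_iff i j).mp (by omega)
  have hp2 : ¬ (j + 1 < μ.part i) := fun h => by
    have := (μ.lt_conj_iff i (j+1)).mpr h
    omega
  apply hy
  rw [mem_betaSet]
  exact ⟨i, hiltM, by omega⟩

lemma hook_beta (hM : μ.len ≤ M) {i j : ℕ} (hn : j < μ.part i) :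
    i < M ∧ μ.hook i j = (μ.part i + (M - 1 - i)) - xco M μ j := by
  have hilen : i < μ.len := (μ.lt_len_iff i).mpr (by omega)
  have hiM : i < M := by omega
  have hcj : μ.conj j ≤ M := le_trans (μ.conj_le_len j) hM
  have h1 : i < μ.conj j := (μ.lt_conj_iff i j).mpr hn
  refine ⟨hiM, ?_⟩
  rw [hook, xco]
  omega

lemma core_flush {p : ℕ} (hp : 0 < p) (hc : IsCore p μ) (hM : μ.len ≤ M) {b : ℕ}
    (hb : b ∈ betaSet M μ) (hpb : p ≤ b) : b - p ∈ betaSet M μ := by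
  by_contra hno
  obtain ⟨j, hj⟩ := xco_surj hM hno
  rw [mem_betaSet] at hb
  obtain ⟨i, hiM, hbe⟩ := hb
  have hxlt : xco M μ j < μ.part i + (M - 1 - i) := by omega
  have hjp : j < μ.part i := (xco_lt_iff hM hiM j).mp hxlt
  have hhook := hook_beta hM hjp
  apply hc i j hjp
  rw [hhook.2]
  have : μ.part i + (M - 1 - i) - xco M μ j = p := by omega
  rw [this]

end PartitionNat
end AuxDev

section AuxDev2
open Finset PartitionNat
namespace PartitionNat
variable {μ : PartitionNat} {M p : ℕ}

lemma betaSet_succ (hM : μ.len ≤ M) :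
    betaSet (M + 1) μ = insert 0 ((betaSet M μ).image (· + 1)) := by
  ext b
  simp only [mem_betaSet, mem_insert, mem_image]
  constructor
  · rintro ⟨i, hi, heq⟩
    by_cases hiM : i < M
    · right
      exact ⟨μ.part i + (M - 1 - i), ⟨i, hiM, rfl⟩, by omega⟩
    · left
      have hie : i = M := by omega
      rw [hie] at heq
      rw [μ.part_eq_zero hM] at heq
      omega
  · rintro (rfl | ⟨a, ha, heq⟩)
    · exact ⟨M, by omega, by rw [μ.part_eq_zero hM]; omega⟩
    · obtain ⟨i, hi, hia⟩ := ha
      exact ⟨i, by omega, by omega⟩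

lemma succ_mod_iff (hp : 1 < p) {s : ℕ} (hs : s < p) (b : ℕ) :
    (b + 1) % p = (s + 1) % p ↔ b % p = s := by
  have hb : b % p < p := Nat.mod_lt _ (by omega)
  rw [Nat.add_mod b 1 p, Nat.add_mod s 1 p, Nat.one_mod_eq_one.mpr (by omega)]
  rw [Nat.mod_eq_of_lt hs]
  rcases Nat.lt_or_ge (b % p + 1) p with h1 | h1 <;>
    rcases Nat.lt_or_ge (s + 1) p with h2 | h2
  · rw [Nat.mod_eq_of_lt h1, Nat.mod_eq_of_lt h2]; omega
  · have hsp : s + 1 = p := by omega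
    rw [Nat.mod_eq_of_lt h1, hsp, Nat.mod_self]; omega
  · have hbp : b % p + 1 = p := by omega
    rw [hbp, Nat.mod_self, Nat.mod_eq_of_lt h2]; omega
  · have hsp : s + 1 = p := by omega
    have hbp : b % p + 1 = p := by omega
    rw [hsp, hbp, Nat.mod_self]; omega

lemma cnt_succ (hp : 1 < p) (hM : μ.len ≤ M) {s : ℕ} (hs : s < p) :
    ((betaSet (M + 1) μ).filter fun b => b % p = (s + 1) % p).card
      = ((betaSet M μ).filter fun b => b % p = s).card
        + (if (s + 1) % p = 0 then 1 else 0) := by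
  classical
  rw [betaSet_succ hM, filter_insert]
  have himg : ((betaSet M μ).image (· + 1)).filter (fun b => b % p = (s + 1) % p)
      = ((betaSet M μ).filter fun b => b % p = s).image (· + 1) := by
    rw [Finset.filter_image]
    congr 1
    apply filter_congr
    intro b _
    exact succ_mod_iff hp hs b
  have hinj : ∀ x ∈ (betaSet M μ).filter fun b => b % p = s,
      ∀ y ∈ (betaSet M μ).filter fun b => b % p = s, x + 1 = y + 1 → x = y := by
    intro x _ y _ h; omega
  have h0 : (0 : ℕ) ∉ ((betaSet M μ).image (· + 1)).filter
      (fun b => b % p = (s + 1) % p) := by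
    simp only [mem_filter, mem_image]
    rintro ⟨⟨a, _, ha⟩, _⟩
    omega
  by_cases hz : (0 : ℕ) % p = (s + 1) % p
  · rw [if_pos hz, card_insert_of_notMem h0, himg, card_image_of_injOn hinj]
    have : (s + 1) % p = 0 := by
      rw [← hz, Nat.zero_mod]
    rw [if_pos this]
  · rw [if_neg hz, himg, card_image_of_injOn hinj]
    have : ¬ (s + 1) % p = 0 := by
      intro h; apply hz; rw [h, Nat.zero_mod]
    rw [if_neg this, Nat.add_zero]

lemma cnt_big (hp : 0 < p) {r : ℕ} (hr : p ≤ r) (B : Finset ℕ) :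
    (B.filter fun b => b % p = r).card = 0 := by
  rw [card_eq_zero, filter_eq_empty_iff]
  intro b _
  have := Nat.mod_lt b hp
  omega

end PartitionNat

section Transfer
open PartitionNat
variable {p : ℕ} (lam gam : PartitionNat)

lemma cnt_step_down (hp : 1 < p) {M : ℕ} (hl : lam.len ≤ M) (hg : gam.len ≤ M)
    (h : ∀ r, ((betaSet (M+1) lam).filter fun b => b % p = r).card
      = ((betaSet (M+1) gam).filter fun b => b % p = r).card) :
    ∀ r, ((betaSet M lam).filter fun b => b % p = r).card
      = ((betaSet M gam).filter fun b => b % p = r).card := by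
  intro s
  rcases Nat.lt_or_ge s p with hs | hs
  · have h1 := cnt_succ (μ := lam) hp hl hs
    have h2 := cnt_succ (μ := gam) hp hg hs
    have h3 := h ((s + 1) % p)
    omega
  · rw [cnt_big (by omega) hs, cnt_big (by omega) hs]

lemma cnt_step_up (hp : 1 < p) {M : ℕ} (hl : lam.len ≤ M) (hg : gam.len ≤ M)
    (h : ∀ r, ((betaSet M lam).filter fun b => b % p = r).card
      = ((betaSet M gam).filter fun b => b % p = r).card) :
    ∀ r, ((betaSet (M+1) lam).filter fun b => b % p = r).card
      = ((betaSet (M+1) gam).filter fun b => b % p = r).card := by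
  intro r
  rcases Nat.lt_or_ge r p with hr | hr
  · obtain ⟨s, hs, hsr⟩ : ∃ s, s < p ∧ (s + 1) % p = r := by
      rcases Nat.eq_zero_or_pos r with h0 | h0
      · refine ⟨p - 1, by omega, ?_⟩
        have hpp : p - 1 + 1 = p := by omega
        rw [hpp, Nat.mod_self, h0]
      · refine ⟨r - 1, by omega, ?_⟩
        have hpp : r - 1 + 1 = r := by omega
        rw [hpp, Nat.mod_eq_of_lt hr]
    rw [← hsr, cnt_succ hp hl hs, cnt_succ hp hg hs, h s]
  · rw [cnt_big (by omega) hr, cnt_big (by omega) hr]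

lemma cnt_up (hp : 1 < p) {M : ℕ} (hl : lam.len ≤ M) (hg : gam.len ≤ M)
    (h : ∀ r, ((betaSet M lam).filter fun b => b % p = r).card
      = ((betaSet M gam).filter fun b => b % p = r).card) (d : ℕ) :
    ∀ r, ((betaSet (M+d) lam).filter fun b => b % p = r).card
      = ((betaSet (M+d) gam).filter fun b => b % p = r).card := by
  induction d with
  | zero => exact h
  | succ d ih =>
      have : M + (d + 1) = (M + d) + 1 := by omega
      rw [this]
      exact cnt_step_up lam gam hp (by omega) (by omega) ih

lemma cnt_down (hp : 1 < p) {M : ℕ} (hl : lam.len ≤ M) (hg : gam.len ≤ M) (d : ℕ)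
    (h : ∀ r, ((betaSet (M+d) lam).filter fun b => b % p = r).card
      = ((betaSet (M+d) gam).filter fun b => b % p = r).card) :
    ∀ r, ((betaSet M lam).filter fun b => b % p = r).card
      = ((betaSet M gam).filter fun b => b % p = r).card := by
  induction d with
  | zero => exact h
  | succ d ih =>
      apply ih
      have hMd : M + (d + 1) = (M + d) + 1 := by omega
      rw [hMd] at h
      exact cnt_step_down lam gam hp (by omega) (by omega) h

end Transfer

section LenBound
open PartitionNat

lemma len_le_of_small {μ : PartitionNat} {M : ℕ} (hM : μ.len ≤ M) {K : ℕ} (hK : K ≤ M)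
    (hsub : ∀ k < K, k ∈ betaSet M μ) : μ.len ≤ M - K := by
  rcases Nat.eq_zero_or_pos K with h0 | h0
  · omega
  suffices hz : μ.part (M - K) = 0 by
    have := μ.lt_len_iff (M - K)
    omega
  by_contra hpos
  have hpos' : 0 < μ.part (M - K) := by omega
  set f : ℕ → ℕ := fun i => μ.part i + (M - 1 - i) with hf
  have hself : Finset.range K ∪ (Finset.range (M - K + 1)).image f ⊆ betaSet M μ := by
    apply Finset.union_subset
    · intro k hk
      exact hsub k (Finset.mem_range.mp hk)
    · intro b hb
      obtain ⟨i, hi, rfl⟩ := Finset.mem_image.mp hb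
      rw [mem_betaSet]
      exact ⟨i, by simp at hi; omega, rfl⟩
  have hdisj : Disjoint (Finset.range K) ((Finset.range (M - K + 1)).image f) := by
    rw [Finset.disjoint_left]
    intro a ha hb
    obtain ⟨i, hi, hfi⟩ := Finset.mem_image.mp hb
    simp only [Finset.mem_range] at ha hi
    have h1 : μ.part (M - K) ≤ μ.part i := μ.antitone (by omega)
    rw [hf] at hfi
    simp only at hfi
    omega
  have hcard : (Finset.range K ∪ (Finset.range (M - K + 1)).image f).card = M + 1 := by
    rw [Finset.card_union_of_disjoint hdisj, Finset.card_range,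
      Finset.card_image_of_injOn, Finset.card_range]
    · omega
    · intro i hi j hj hij
      exact beta_injOn μ M i (by simp at hi ⊢; omega) j (by simp at hj ⊢; omega) hij
  have := Finset.card_le_card hself
  rw [hcard, betaSet_card] at this
  omega

end LenBound
end AuxDev2

section AuxDev3
open Finset

lemma sum_range_le_sum : ∀ (n : ℕ) (Q : Finset ℕ), Q.card = n →
    ∑ i ∈ range n, i ≤ ∑ q ∈ Q, q := by
  intro n
  induction n with
  | zero => intro Q hQ; simp
  | succ n ih =>
      intro Q hQ
      have hne : Q.Nonempty := by
        rw [← Finset.card_pos]; omega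
      set m := Q.max' hne with hm
      have hmQ : m ∈ Q := Q.max'_mem hne
      have hE : (Q.erase m).card = n := by
        rw [Finset.card_erase_of_mem hmQ]; omega
      have hsum := Finset.sum_erase_add Q id hmQ
      have hge := ih (Q.erase m) hE
      have hmn : n ≤ m := by
        have hsub : Q ⊆ range (m + 1) := by
          intro x hx
          simp only [mem_range]
          have := Q.le_max' x hx
          omega
        have := Finset.card_le_card hsub
        rw [card_range] at this
        omega
      rw [Finset.sum_range_succ]
      simp only [id_eq] at hsum
      omega

lemma classify_excess : ∀ (n : ℕ) (Q : Finset ℕ), Q.card = n →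
    ((∑ q ∈ Q, q = ∑ i ∈ range n, i) → Q = range n) ∧
    ((∑ q ∈ Q, q = ∑ i ∈ range n, i + 1) → 1 ≤ n ∧ Q = insert n (range (n - 1))) ∧
    ((∑ q ∈ Q, q = ∑ i ∈ range n, i + 2) →
       (Q = insert (n + 1) (range (n - 1))) ∨
       (2 ≤ n ∧ Q = insert n (insert (n - 1) (range (n - 2))))) := by
  intro n
  induction n with
  | zero =>
      intro Q hQ
      rw [Finset.card_eq_zero] at hQ
      subst hQ
      simp
  | succ n ih =>
      intro Q hQ
      have hne : Q.Nonempty := by rw [← Finset.card_pos]; omega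
      set m := Q.max' hne with hm
      have hmQ : m ∈ Q := Q.max'_mem hne
      have hE : (Q.erase m).card = n := by rw [Finset.card_erase_of_mem hmQ]; omega
      have hsum := Finset.sum_erase_add Q id hmQ
      simp only [id_eq] at hsum
      have hge := sum_range_le_sum n (Q.erase m) hE
      have hmn : n ≤ m := by
        have hsub : Q ⊆ range (m + 1) := by
          intro x hx
          simp only [mem_range]
          have := Q.le_max' x hx
          omega
        have := Finset.card_le_card hsub
        rw [card_range] at this
        omega
      have hlt : ∀ x ∈ Q.erase m, x < m := by
        intro x hx
        rcases Finset.mem_erase.mp hx with ⟨hne2, hxQ⟩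
        have := Q.le_max' x hxQ
        omega
      have hins : insert m (Q.erase m) = Q := Finset.insert_erase hmQ
      have ihE := ih (Q.erase m) hE
      rw [Finset.sum_range_succ]
      refine ⟨?_, ?_, ?_⟩
      · intro h
        have hmn2 : m = n ∧ ∑ q ∈ Q.erase m, q = ∑ i ∈ range n, i := by omega
        have hEeq := ihE.1 hmn2.2
        rw [← hins, hEeq, hmn2.1, Finset.range_add_one]
      · intro h
        rcases (by omega : m = n + 1 ∧ (∑ q ∈ Q.erase m, q = ∑ i ∈ range n, i) ∨
            m = n ∧ (∑ q ∈ Q.erase m, q = ∑ i ∈ range n, i + 1)) with ⟨h1, h2⟩ | ⟨h1, h2⟩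
        · have hEeq := ihE.1 h2
          refine ⟨by omega, ?_⟩
          have e1 : n + 1 - 1 = n := by omega
          rw [e1, ← hins, hEeq, h1]
        · exfalso
          have := ihE.2.1 h2
          have hnE : n ∈ Q.erase m := by
            rw [this.2]; exact Finset.mem_insert_self _ _
          have := hlt n hnE
          omega
      · intro h
        rcases (by omega : m = n + 2 ∧ (∑ q ∈ Q.erase m, q = ∑ i ∈ range n, i) ∨
            m = n + 1 ∧ (∑ q ∈ Q.erase m, q = ∑ i ∈ range n, i + 1) ∨
            m = n ∧ (∑ q ∈ Q.erase m, q = ∑ i ∈ range n, i + 2)) with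
          ⟨h1, h2⟩ | ⟨h1, h2⟩ | ⟨h1, h2⟩
        · left
          have hEeq := ihE.1 h2
          have e1 : n + 1 + 1 = n + 2 := by omega
          have e2 : n + 1 - 1 = n := by omega
          rw [e1, e2, ← hins, hEeq, h1]
        · right
          have hEeq := ihE.2.1 h2
          refine ⟨by omega, ?_⟩
          have e1 : n + 1 - 1 = n := by omega
          have e2 : n + 1 - 2 = n - 1 := by omega
          rw [e1, e2, ← hins, hEeq.2, h1]
        · exfalso
          rcases ihE.2.2 h2 with hc | hc
          · have hnE : n + 1 ∈ Q.erase m := by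
              rw [hc]; exact Finset.mem_insert_self _ _
            have := hlt _ hnE
            omega
          · have hnE : n ∈ Q.erase m := by
              rw [hc.2]; exact Finset.mem_insert_self _ _
            have := hlt _ hnE
            omega

lemma subset_of_excess_le2 (Q : Finset ℕ) (n : ℕ) (hn : Q.card = n)
    (h : ∑ q ∈ Q, q ≤ ∑ i ∈ range n, i + 2) :
    range (n - 2) ⊆ Q := by
  have hge := sum_range_le_sum n Q hn
  have hcl := classify_excess n Q hn
  rcases (by omega : (∑ q ∈ Q, q = ∑ i ∈ range n, i) ∨
      (∑ q ∈ Q, q = ∑ i ∈ range n, i + 1) ∨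
      (∑ q ∈ Q, q = ∑ i ∈ range n, i + 2)) with h1 | h1 | h1
  · rw [hcl.1 h1]
    intro x hx
    simp only [mem_range] at hx ⊢
    omega
  · rcases hcl.2.1 h1 with ⟨hn, heq⟩
    rw [heq]
    intro x hx
    simp only [mem_range] at hx
    simp only [Finset.mem_insert, mem_range]
    omega
  · rcases hcl.2.2 h1 with heq | ⟨hn, heq⟩ <;> rw [heq] <;> intro x hx <;>
      simp only [mem_range] at hx <;>
      simp only [Finset.mem_insert, mem_range] <;> omega

lemma sum_eq_two_cases (f : ℕ → ℕ) (p : ℕ) (h : ∑ r ∈ range p, f r = 2) :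
    (∃ r₀, r₀ < p ∧ f r₀ = 2 ∧ ∀ r < p, r ≠ r₀ → f r = 0) ∨
    (∃ r₁ r₂, r₁ < p ∧ r₂ < p ∧ r₁ ≠ r₂ ∧ f r₁ = 1 ∧ f r₂ = 1 ∧
      ∀ r < p, r ≠ r₁ → r ≠ r₂ → f r = 0) := by
  classical
  set s := (range p).filter (fun r => f r ≠ 0) with hs
  have hss : ∑ r ∈ s, f r = 2 := by
    rw [hs, Finset.sum_filter_ne_zero]
    exact h
  have hout : ∀ r < p, r ∉ s → f r = 0 := by
    intro r hr hrs
    by_contra hno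
    exact hrs (Finset.mem_filter.mpr ⟨Finset.mem_range.mpr hr, hno⟩)
  have hpos : ∀ x ∈ s, 1 ≤ f x := by
    intro x hx
    have := (Finset.mem_filter.mp hx).2
    omega
  have hcard : s.card ≤ 2 := by
    have h2 : s.card ≤ ∑ r ∈ s, f r := by
      simpa using Finset.card_nsmul_le_sum s f 1 hpos
    omega
  have hne : s.Nonempty := by
    rcases Finset.eq_empty_or_nonempty s with h0 | h0
    · rw [h0] at hss; simp at hss
    · exact h0
  have hc1 : 1 ≤ s.card := Finset.card_pos.mpr hne
  rcases (by omega : s.card = 1 ∨ s.card = 2) with hc | hc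
  · obtain ⟨r₀, hr0⟩ := Finset.card_eq_one.mp hc
    left
    have hr0p : r₀ < p := by
      have : r₀ ∈ s := by rw [hr0]; exact Finset.mem_singleton_self r₀
      exact Finset.mem_range.mp (Finset.mem_filter.mp this).1
    refine ⟨r₀, hr0p, ?_, ?_⟩
    · rw [hr0, Finset.sum_singleton] at hss
      exact hss
    · intro r hr hrne
      apply hout r hr
      rw [hr0]
      simp [hrne]
  · obtain ⟨a, b, hab, hsab⟩ := Finset.card_eq_two.mp hc
    right
    have haS : a ∈ s := by rw [hsab]; simp
    have hbS : b ∈ s := by rw [hsab]; simp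
    have hap : a < p := Finset.mem_range.mp (Finset.mem_filter.mp haS).1
    have hbp : b < p := Finset.mem_range.mp (Finset.mem_filter.mp hbS).1
    rw [hsab, Finset.sum_pair hab] at hss
    have hfa := hpos a haS
    have hfb := hpos b hbS
    refine ⟨a, b, hap, hbp, hab, by omega, by omega, ?_⟩
    intro r hr h1 h2
    apply hout r hr
    rw [hsab]
    simp [h1, h2]

lemma move_cnt {B : Finset ℕ} {p a b : ℕ} (hab : a % p = b % p) (ha : a ∈ B)
    (hb : b ∉ B) (r : ℕ) :
    (((B \ {a}) ∪ {b}).filter fun x => x % p = r).card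
      = (B.filter fun x => x % p = r).card := by
  classical
  rw [Finset.filter_union, Finset.filter_singleton,
    Finset.sdiff_singleton_eq_erase, Finset.filter_erase]
  by_cases hr : b % p = r
  · rw [if_pos hr]
    have har : a ∈ B.filter (fun x => x % p = r) :=
      Finset.mem_filter.mpr ⟨ha, by omega⟩
    have hd : Disjoint ((B.filter (fun x => x % p = r)).erase a) ({b} : Finset ℕ) := by
      rw [Finset.disjoint_singleton_right]
      intro hmem
      exact hb (Finset.mem_filter.mp (Finset.mem_of_mem_erase hmem)).1
    rw [Finset.card_union_of_disjoint hd, Finset.card_erase_of_mem har,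
      Finset.card_singleton]
    have : 1 ≤ (B.filter (fun x => x % p = r)).card :=
      Finset.card_pos.mpr ⟨a, har⟩
    omega
  · rw [if_neg hr]
    have har : a ∉ B.filter (fun x => x % p = r) := by
      intro hmem
      have := (Finset.mem_filter.mp hmem).2
      exact hr (by omega)
    rw [Finset.erase_eq_of_notMem har, Finset.union_empty]

lemma move_sum {B : Finset ℕ} {a b : ℕ} (ha : a ∈ B) (hb : b ∉ B) :
    ∑ x ∈ (B \ {a}) ∪ {b}, x + a = ∑ x ∈ B, x + b := by
  have hd : Disjoint (B \ {a}) ({b} : Finset ℕ) := by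
    rw [Finset.disjoint_right]
    intro x hx
    rw [Finset.mem_singleton] at hx
    subst hx
    intro hmem
    exact hb (Finset.mem_sdiff.mp hmem).1
  rw [Finset.sum_union hd, Finset.sum_singleton]
  have : B \ {a} = B.erase a := Finset.sdiff_singleton_eq_erase a B
  rw [this]
  have := Finset.sum_erase_add B id ha
  simp only [id_eq] at this
  omega

end AuxDev3

section AuxDev4
open Finset

lemma mod_div_self_right' {p r q : ℕ} (hr : r < p) :
    (r + q * p) % p = r ∧ (r + q * p) / p = q := by
  constructor
  · rw [Nat.add_mul_mod_self_right, Nat.mod_eq_of_lt hr]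
  · rw [Nat.add_mul_div_right _ _ (by omega : 0 < p), Nat.div_eq_of_lt hr, Nat.zero_add]

lemma dec_eq (b p : ℕ) : b % p + (b / p) * p = b := by
  rw [Nat.mul_comm (b / p) p]
  exact Nat.mod_add_div b p

lemma flush_class {p : ℕ} (hp : 0 < p) {B : Finset ℕ}
    (hflush : ∀ b ∈ B, p ≤ b → b - p ∈ B)
    {r : ℕ} (hr : r < p) (hrB : r ∈ B) :
    B.filter (fun b => b % p = r)
      = (range ((B.filter (fun b => b % p = r)).card)).image (fun q => r + q * p) := by
  classical
  set C := B.filter (fun b => b % p = r) with hC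
  have hrC : r ∈ C := Finset.mem_filter.mpr ⟨hrB, Nat.mod_eq_of_lt hr⟩
  have hne : C.Nonempty := ⟨r, hrC⟩
  set m := C.max' hne with hm
  have hmC : m ∈ C := C.max'_mem hne
  have hmB : m ∈ B := (Finset.mem_filter.mp hmC).1
  have hmr : m % p = r := (Finset.mem_filter.mp hmC).2
  have hrm : r ≤ m := C.le_max' r hrC
  have hdown : ∀ k, k * p ≤ m - r → m - k * p ∈ B := by
    intro k
    induction k with
    | zero => intro _; simpa using hmB
    | succ k ih =>
        intro hk
        rw [Nat.succ_mul] at hk ⊢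
        have h1 : m - k * p ∈ B := ih (by omega)
        have h2 : p ≤ m - k * p := by omega
        have h3 := hflush _ h1 h2
        have e : m - k * p - p = m - (k * p + p) := by omega
        rwa [e] at h3
  have hd : m = r + (m / p) * p := by
    have h3 := Nat.mod_add_div m p
    rw [hmr, Nat.mul_comm p (m / p)] at h3
    omega
  set d := m / p with hdd
  have himg : C = (range (d + 1)).image (fun q => r + q * p) := by
    ext b
    constructor
    · intro hbC
      have hbB : b ∈ B := (Finset.mem_filter.mp hbC).1
      have hbr : b % p = r := (Finset.mem_filter.mp hbC).2
      have hble : b ≤ m := C.le_max' b hbC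
      have hdivle : b / p ≤ d := Nat.div_le_div_right hble
      refine Finset.mem_image.mpr ⟨b / p, Finset.mem_range.mpr (by omega), ?_⟩
      rw [← hbr]
      exact dec_eq b p
    · intro hb
      obtain ⟨q, hq, rfl⟩ := Finset.mem_image.mp hb
      have hqd : q ≤ d := by simp only [Finset.mem_range] at hq; omega
      have hqp : q * p ≤ d * p := Nat.mul_le_mul_right p hqd
      refine Finset.mem_filter.mpr ⟨?_, (mod_div_self_right' hr).1⟩
      have h1 := hdown (d - q) (by rw [Nat.sub_mul]; omega)
      have e : m - (d - q) * p = r + q * p := by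
        rw [Nat.sub_mul]
        omega
      rwa [e] at h1
  have hcard : C.card = d + 1 := by
    rw [himg, Finset.card_image_of_injOn, Finset.card_range]
    intro x _ y _ hxy
    have hxy' : r + x * p = r + y * p := hxy
    have h1 := (mod_div_self_right' (q := x) hr).2
    have h2 := (mod_div_self_right' (q := y) hr).2
    rw [hxy'] at h1
    rw [h1] at h2
    omega
  rw [hcard]
  exact himg

lemma flush_mem_iff {p : ℕ} (hp : 0 < p) {B : Finset ℕ}
    (hflush : ∀ b ∈ B, p ≤ b → b - p ∈ B)
    (hsmall : ∀ k < p, k ∈ B) (b : ℕ) :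
    b ∈ B ↔ b / p < (B.filter (fun x => x % p = b % p)).card := by
  have hr : b % p < p := Nat.mod_lt _ hp
  have hcls := flush_class hp hflush hr (hsmall _ hr)
  constructor
  · intro hbB
    have hbC : b ∈ B.filter (fun x => x % p = b % p) := Finset.mem_filter.mpr ⟨hbB, rfl⟩
    rw [hcls] at hbC
    obtain ⟨q, hq, heq⟩ := Finset.mem_image.mp hbC
    have := (mod_div_self_right' (q := q) hr).2
    rw [heq] at this
    simp only [Finset.mem_range] at hq
    omega
  · intro hlt
    have : b % p + (b / p) * p ∈ (range ((B.filter (fun x => x % p = b % p)).card)).image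
        (fun q => b % p + q * p) := Finset.mem_image_of_mem _ (Finset.mem_range.mpr hlt)
    rw [← hcls, dec_eq b p] at this
    exact (Finset.mem_filter.mp this).1

lemma main_classify {p : ℕ} (hp : 2 ≤ p) {B B' : Finset ℕ}
    (hflush : ∀ b ∈ B, p ≤ b → b - p ∈ B)
    (hsmall : ∀ k < 2 * p, k ∈ B)
    (hcnt : ∀ r, (B'.filter fun x => x % p = r).card = (B.filter fun x => x % p = r).card)
    (hsum : ∑ b ∈ B', b = ∑ b ∈ B, b + 2 * p) :
    (∀ k, k + 2 * p ∈ B → k ∈ B') ∧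
    ∃ m₁ m₂ : ℕ, m₁ ∈ B ∧ m₂ ∈ B ∧
      (∀ b ∈ B, b % p = m₁ % p → b ≤ m₁) ∧ (∀ b ∈ B, b % p = m₂ % p → b ≤ m₂) ∧
      ((m₁ % p ≠ m₂ % p ∧ B' = (B \ {m₁, m₂}) ∪ {m₁ + p, m₂ + p}) ∨
       (m₁ = m₂ ∧ B' = (B \ {m₁}) ∪ {m₁ + 2 * p}) ∨
       (m₁ = m₂ ∧ p ≤ m₁ ∧ B' = (B \ {m₁ - p}) ∪ {m₁ + p})) := by
  classical
  have hp0 : 0 < p := by omega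
  set c : ℕ → ℕ := fun r => (B.filter (fun x => x % p = r)).card with hc
  have hcls : ∀ r < p, B.filter (fun x => x % p = r)
      = (range (c r)).image (fun q => r + q * p) :=
    fun r hr => flush_class hp0 hflush hr (hsmall r (by omega))
  have hmemB : ∀ b, b ∈ B ↔ b / p < c (b % p) :=
    flush_mem_iff hp0 hflush (fun k hk => hsmall k (by omega))
  set Q : ℕ → Finset ℕ := fun r => (B'.filter (fun x => x % p = r)).image (fun x => x / p)
    with hQdef
  have hdivinj : ∀ r : ℕ, ∀ x ∈ B'.filter (fun y => y % p = r),
      ∀ y ∈ B'.filter (fun y => y % p = r), x / p = y / p → x = y := by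
    intro r x hx y hy h
    have hx2 := (Finset.mem_filter.mp hx).2
    have hy2 := (Finset.mem_filter.mp hy).2
    have e1 := dec_eq x p
    have e2 := dec_eq y p
    rw [h] at e1
    rw [hx2] at e1
    rw [hy2] at e2
    omega
  have hQcard : ∀ r, (Q r).card = c r := by
    intro r
    rw [hQdef]
    simp only
    rw [Finset.card_image_of_injOn (hdivinj r)]
    exact hcnt r
  have hmemS : ∀ b, b ∈ B' ↔ b / p ∈ Q (b % p) := by
    intro b
    constructor
    · intro hb
      exact Finset.mem_image_of_mem _ (Finset.mem_filter.mpr ⟨hb, rfl⟩)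
    · intro hb
      obtain ⟨x, hx, hxd⟩ := Finset.mem_image.mp hb
      have hx1 := (Finset.mem_filter.mp hx).1
      have hx2 := (Finset.mem_filter.mp hx).2
      have e1 := dec_eq x p
      have e2 := dec_eq b p
      rw [hxd] at e1
      rw [hx2] at e1
      have : x = b := by omega
      rwa [← this]
  have hSr : ∀ r < p, B'.filter (fun x => x % p = r) = (Q r).image (fun q => r + q * p) := by
    intro r hr
    rw [hQdef]
    simp only
    rw [Finset.image_image]
    apply Finset.ext
    intro b
    simp only [Finset.mem_filter, Finset.mem_image, Function.comp_apply]
    constructor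
    · intro hb
      refine ⟨b, ⟨hb.1, hb.2⟩, ?_⟩
      rw [← hb.2]
      exact dec_eq b p
    · rintro ⟨x, ⟨hx1, hx2⟩, rfl⟩
      have e1 := dec_eq x p
      rw [hx2] at e1
      rw [e1]
      exact ⟨hx1, hx2⟩
  have hmulinj : ∀ r < p, ∀ x ∈ Q r, ∀ y ∈ Q r, r + x * p = r + y * p → x = y := by
    intro r hr x _ y _ h
    have : x * p = y * p := by omega
    exact Nat.eq_of_mul_eq_mul_right hp0 this
  have hmulinj2 : ∀ r, r < p → ∀ x ∈ range (c r), ∀ y ∈ range (c r),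
      r + x * p = r + y * p → x = y := by
    intro r hr x _ y _ h
    have : x * p = y * p := by omega
    exact Nat.eq_of_mul_eq_mul_right hp0 this
  have hSsum : ∀ r < p, ∑ b ∈ B'.filter (fun x => x % p = r), b
      = (c r) * r + p * ∑ q ∈ Q r, q := by
    intro r hr
    rw [hSr r hr, Finset.sum_image (hmulinj r hr), Finset.sum_add_distrib,
      Finset.sum_const, hQcard r, smul_eq_mul, ← Finset.sum_mul, Nat.mul_comm (∑ q ∈ Q r, q) p]
  have hCsum : ∀ r < p, ∑ b ∈ B.filter (fun x => x % p = r), b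
      = (c r) * r + p * ∑ q ∈ range (c r), q := by
    intro r hr
    rw [hcls r hr, Finset.sum_image (hmulinj2 r hr), Finset.sum_add_distrib,
      Finset.sum_const, Finset.card_range, smul_eq_mul, ← Finset.sum_mul,
      Nat.mul_comm (∑ q ∈ range (c r), q) p]
  have hB'fib : ∑ r ∈ range p, ∑ b ∈ B'.filter (fun x => x % p = r), b = ∑ b ∈ B', b :=
    Finset.sum_fiberwise_of_maps_to (fun x _ => Finset.mem_range.mpr (Nat.mod_lt x hp0)) id
  have hBfib : ∑ r ∈ range p, ∑ b ∈ B.filter (fun x => x % p = r), b = ∑ b ∈ B, b :=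
    Finset.sum_fiberwise_of_maps_to (fun x _ => Finset.mem_range.mpr (Nat.mod_lt x hp0)) id
  have hkey : ∑ r ∈ range p, ∑ q ∈ Q r, q = ∑ r ∈ range p, ∑ q ∈ range (c r), q + 2 := by
    have e1 : ∑ r ∈ range p, ((c r) * r + p * ∑ q ∈ Q r, q)
        = ∑ r ∈ range p, ((c r) * r + p * ∑ q ∈ range (c r), q) + 2 * p := by
      rw [← Finset.sum_congr rfl (fun r hr => hSsum r (Finset.mem_range.mp hr)),
        ← Finset.sum_congr rfl (fun r hr => hCsum r (Finset.mem_range.mp hr)),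
        hB'fib, hBfib]
      exact hsum
    rw [Finset.sum_add_distrib, Finset.sum_add_distrib, ← Finset.mul_sum, ← Finset.mul_sum]
      at e1
    have e2 : p * (∑ r ∈ range p, ∑ q ∈ Q r, q)
        = p * (∑ r ∈ range p, ∑ q ∈ range (c r), q + 2) := by
      rw [Nat.mul_add]
      omega
    exact Nat.eq_of_mul_eq_mul_left hp0 e2
  have hge : ∀ r, ∑ q ∈ range (c r), q ≤ ∑ q ∈ Q r, q :=
    fun r => sum_range_le_sum (c r) (Q r) (hQcard r)
  set e : ℕ → ℕ := fun r => ∑ q ∈ Q r, q - ∑ q ∈ range (c r), q with he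
  have hesum : ∑ r ∈ range p, e r = 2 := by
    have h1 : ∀ r ∈ range p, ∑ q ∈ Q r, q = ∑ q ∈ range (c r), q + e r := by
      intro r _
      have := hge r
      rw [he]
      simp only
      omega
    rw [Finset.sum_congr rfl h1, Finset.sum_add_distrib] at hkey
    omega
  have hele2 : ∀ r < p, ∑ q ∈ Q r, q ≤ ∑ q ∈ range (c r), q + 2 := by
    intro r hr
    have h1 : e r ≤ ∑ r ∈ range p, e r :=
      Finset.single_le_sum (f := e) (fun _ _ => Nat.zero_le _) (Finset.mem_range.mpr hr)
    have h2 := hge r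
    rw [hesum] at h1
    rw [he] at h1
    simp only at h1
    omega
  have hbeq : ∀ b x : ℕ, x % p = b % p → (b = x ↔ b / p = x / p) := by
    intro b x hx
    constructor
    · intro h; rw [h]
    · intro h
      have e1 := dec_eq b p
      have e2 := dec_eq x p
      rw [hx, ← h] at e2
      omega
  have hcmem : ∀ r < p, 1 ≤ c r := by
    intro r hr
    apply Finset.card_pos.mpr
    exact ⟨r, Finset.mem_filter.mpr ⟨hsmall r (by omega), Nat.mod_eq_of_lt hr⟩⟩
  have hclass0 : ∀ r < p, e r = 0 →
      B'.filter (fun x => x % p = r) = B.filter (fun x => x % p = r) := by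
    intro r hr h0
    have hQr : Q r = range (c r) := by
      apply (classify_excess (c r) (Q r) (hQcard r)).1
      rw [he] at h0
      simp only at h0
      have := hge r
      omega
    rw [hSr r hr, hQr, ← hcls r hr]
  have hmem0 : ∀ r < p, e r = 0 → ∀ b, b % p = r → (b ∈ B' ↔ b ∈ B) := by
    intro r hr h0 b hbr
    have h2 := hclass0 r hr h0
    constructor
    · intro hb
      have : b ∈ B'.filter (fun x => x % p = r) := Finset.mem_filter.mpr ⟨hb, hbr⟩
      rw [h2] at this
      exact (Finset.mem_filter.mp this).1
    · intro hb
      have : b ∈ B.filter (fun x => x % p = r) := Finset.mem_filter.mpr ⟨hb, hbr⟩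
      rw [← h2] at this
      exact (Finset.mem_filter.mp this).1
  constructor
  · -- small elements survive
    intro k hk2
    have hr : k % p < p := Nat.mod_lt _ hp0
    have hmod : (k + 2 * p) % p = k % p := by
      have e1 : k + 2 * p = k + p + p := by omega
      rw [e1, Nat.add_mod_right, Nat.add_mod_right]
    have hdiv : (k + 2 * p) / p = k / p + 2 := Nat.add_mul_div_right k 2 hp0
    have h1 : k / p + 2 < c (k % p) := by
      have h2 := (hmemB (k + 2 * p)).mp hk2
      rw [hmod, hdiv] at h2
      exact h2
    have hsub := subset_of_excess_le2 (Q (k % p)) (c (k % p)) (hQcard _) (hele2 _ hr)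
    have hkQ : k / p ∈ Q (k % p) := hsub (Finset.mem_range.mpr (by omega))
    exact (hmemS k).mpr hkQ
  · rcases sum_eq_two_cases e p hesum with ⟨r₀, hr₀, he2, hrest⟩ |
      ⟨r₁, r₂, hr₁, hr₂, hner, he1a, he1b, hrest⟩
    · -- one class with excess 2
      have hQ0sum : ∑ q ∈ Q r₀, q = ∑ q ∈ range (c r₀), q + 2 := by
        have := hge r₀
        rw [he] at he2
        simp only at he2
        omega
      have hc1 := hcmem r₀ hr₀
      set c₀ := c r₀ with hc₀
      set m := r₀ + (c₀ - 1) * p with hmdef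
      have hmmod : m % p = r₀ := (mod_div_self_right' hr₀).1
      have hmdiv : m / p = c₀ - 1 := (mod_div_self_right' hr₀).2
      have hmB : m ∈ B := by
        rw [hmemB m, hmmod, hmdiv]
        omega
      have hmax : ∀ b ∈ B, b % p = m % p → b ≤ m := by
        intro b hb hbr
        rw [hmmod] at hbr
        have h1 := (hmemB b).mp hb
        rw [hbr] at h1
        have e1 := dec_eq b p
        have e2 : (b / p) * p ≤ (c₀ - 1) * p := Nat.mul_le_mul_right p (by omega)
        omega
      rcases (classify_excess (c r₀) (Q r₀) (hQcard r₀)).2.2 hQ0sum with hform | ⟨hcge2, hform⟩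
      · -- Q r₀ = insert (c₀+1) (range (c₀-1)) : oneBeta shape
        refine ⟨m, m, hmB, hmB, hmax, hmax, Or.inr (Or.inl ⟨rfl, ?_⟩)⟩
        ext b
        have hbp : b % p < p := Nat.mod_lt _ hp0
        have hm2pmod : (m + 2 * p) % p = r₀ := by
          have e1 : m + 2 * p = m + p + p := by omega
          rw [e1, Nat.add_mod_right, Nat.add_mod_right, hmmod]
        have hm2pdiv : (m + 2 * p) / p = c₀ + 1 := by
          rw [Nat.add_mul_div_right m 2 hp0, hmdiv]
          omega
        simp only [Finset.mem_union, Finset.mem_sdiff, Finset.mem_singleton]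
        by_cases hbr : b % p = r₀
        · have hqm : b = m ↔ b / p = c₀ - 1 := by
            rw [hbeq b m (by rw [hmmod, hbr]), hmdiv]
          have hqm2 : b = m + 2 * p ↔ b / p = c₀ + 1 := by
            rw [hbeq b (m + 2 * p) (by rw [hm2pmod, hbr]), hm2pdiv]
          rw [hmemS b, hmemB b, hbr, ← hc₀, hform, hqm, hqm2]
          simp only [Finset.mem_insert, Finset.mem_range]
          omega
        · have hbm : ¬ b = m := fun h => hbr (by rw [h, hmmod])
          have hbm2 : ¬ b = m + 2 * p := fun h => hbr (by rw [h, hm2pmod])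
          rw [hmem0 (b % p) hbp (hrest _ hbp hbr) b rfl]
          simp [hbm, hbm2]
      · -- Q r₀ = insert c₀ (insert (c₀-1) (range (c₀-2))) : sqBeta shape
        have hpm : p ≤ m := by
          have : 1 * p ≤ (c₀ - 1) * p := Nat.mul_le_mul_right p (by omega)
          omega
        have hmpeq : m - p = r₀ + (c₀ - 2) * p := by
          have e : c₀ - 1 = (c₀ - 2) + 1 := by omega
          rw [hmdef, e, Nat.succ_mul]
          omega
        have hmpmod : (m - p) % p = r₀ := by
          rw [hmpeq]; exact (mod_div_self_right' hr₀).1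
        have hmpdiv : (m - p) / p = c₀ - 2 := by
          rw [hmpeq]; exact (mod_div_self_right' hr₀).2
        have hmppmod : (m + p) % p = r₀ := by rw [Nat.add_mod_right, hmmod]
        have hmppdiv : (m + p) / p = c₀ := by
          have e : m + p = m + 1 * p := by omega
          rw [e, Nat.add_mul_div_right m 1 hp0, hmdiv]
          omega
        refine ⟨m, m, hmB, hmB, hmax, hmax, Or.inr (Or.inr ⟨rfl, hpm, ?_⟩)⟩
        ext b
        have hbp : b % p < p := Nat.mod_lt _ hp0
        simp only [Finset.mem_union, Finset.mem_sdiff, Finset.mem_singleton]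
        by_cases hbr : b % p = r₀
        · have hqm : b = m - p ↔ b / p = c₀ - 2 := by
            rw [hbeq b (m - p) (by rw [hmpmod, hbr]), hmpdiv]
          have hqm2 : b = m + p ↔ b / p = c₀ := by
            rw [hbeq b (m + p) (by rw [hmppmod, hbr]), hmppdiv]
          rw [hmemS b, hmemB b, hbr, ← hc₀, hform, hqm, hqm2]
          simp only [Finset.mem_insert, Finset.mem_range]
          omega
        · have hbm : ¬ b = m - p := fun h => hbr (by rw [h, hmpmod])
          have hbm2 : ¬ b = m + p := fun h => hbr (by rw [h, hmppmod])
          rw [hmem0 (b % p) hbp (hrest _ hbp hbr) b rfl]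
          simp [hbm, hbm2]
    · -- two classes with excess 1
      have hgets : ∀ r < p, e r = 1 → 1 ≤ c r ∧ Q r = insert (c r) (range (c r - 1)) := by
        intro r hr h1
        have hQs : ∑ q ∈ Q r, q = ∑ q ∈ range (c r), q + 1 := by
          have := hge r
          rw [he] at h1
          simp only at h1
          omega
        have := (classify_excess (c r) (Q r) (hQcard r)).2.1 hQs
        exact ⟨this.1, this.2⟩
      obtain ⟨hc1a, hforma⟩ := hgets r₁ hr₁ he1a
      obtain ⟨hc1b, hformb⟩ := hgets r₂ hr₂ he1b
      set m₁ := r₁ + (c r₁ - 1) * p with hm1def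
      set m₂ := r₂ + (c r₂ - 1) * p with hm2def
      have hm1mod : m₁ % p = r₁ := (mod_div_self_right' hr₁).1
      have hm1div : m₁ / p = c r₁ - 1 := (mod_div_self_right' hr₁).2
      have hm2mod : m₂ % p = r₂ := (mod_div_self_right' hr₂).1
      have hm2div : m₂ / p = c r₂ - 1 := (mod_div_self_right' hr₂).2
      have hm1B : m₁ ∈ B := by rw [hmemB m₁, hm1mod, hm1div]; omega
      have hm2B : m₂ ∈ B := by rw [hmemB m₂, hm2mod, hm2div]; omega
      have hmax1 : ∀ b ∈ B, b % p = m₁ % p → b ≤ m₁ := by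
        intro b hb hbr
        rw [hm1mod] at hbr
        have h1 := (hmemB b).mp hb
        rw [hbr] at h1
        have e1 := dec_eq b p
        have e2 : (b / p) * p ≤ (c r₁ - 1) * p := Nat.mul_le_mul_right p (by omega)
        omega
      have hmax2 : ∀ b ∈ B, b % p = m₂ % p → b ≤ m₂ := by
        intro b hb hbr
        rw [hm2mod] at hbr
        have h1 := (hmemB b).mp hb
        rw [hbr] at h1
        have e1 := dec_eq b p
        have e2 : (b / p) * p ≤ (c r₂ - 1) * p := Nat.mul_le_mul_right p (by omega)
        omega
      have hm1pmod : (m₁ + p) % p = r₁ := by rw [Nat.add_mod_right, hm1mod]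
      have hm2pmod : (m₂ + p) % p = r₂ := by rw [Nat.add_mod_right, hm2mod]
      have hm1pdiv : (m₁ + p) / p = c r₁ := by
        have e : m₁ + p = m₁ + 1 * p := by omega
        rw [e, Nat.add_mul_div_right m₁ 1 hp0, hm1div]
        omega
      have hm2pdiv : (m₂ + p) / p = c r₂ := by
        have e : m₂ + p = m₂ + 1 * p := by omega
        rw [e, Nat.add_mul_div_right m₂ 1 hp0, hm2div]
        omega
      refine ⟨m₁, m₂, hm1B, hm2B, hmax1, hmax2,
        Or.inl ⟨by rw [hm1mod, hm2mod]; exact hner, ?_⟩⟩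
      ext b
      have hbp : b % p < p := Nat.mod_lt _ hp0
      simp only [Finset.mem_union, Finset.mem_sdiff, Finset.mem_insert, Finset.mem_singleton]
      by_cases hbr1 : b % p = r₁
      · have hqm : b = m₁ ↔ b / p = c r₁ - 1 := by
          rw [hbeq b m₁ (by rw [hm1mod, hbr1]), hm1div]
        have hqmp : b = m₁ + p ↔ b / p = c r₁ := by
          rw [hbeq b (m₁ + p) (by rw [hm1pmod, hbr1]), hm1pdiv]
        have hbm2 : ¬ b = m₂ := fun h => hner (by rw [← hbr1, h, hm2mod])
        have hbm2p : ¬ b = m₂ + p := fun h => hner (by rw [← hbr1, h, hm2pmod])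
        rw [hmemS b, hmemB b, hbr1, hforma, hqm, hqmp]
        simp only [Finset.mem_insert, Finset.mem_range, hbm2, hbm2p, or_false]
        omega
      · by_cases hbr2 : b % p = r₂
        · have hqm : b = m₂ ↔ b / p = c r₂ - 1 := by
            rw [hbeq b m₂ (by rw [hm2mod, hbr2]), hm2div]
          have hqmp : b = m₂ + p ↔ b / p = c r₂ := by
            rw [hbeq b (m₂ + p) (by rw [hm2pmod, hbr2]), hm2pdiv]
          have hbm1 : ¬ b = m₁ := fun h => hbr1 (by rw [h, hm1mod])
          have hbm1p : ¬ b = m₁ + p := fun h => hbr1 (by rw [h, hm1pmod])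
          rw [hmemS b, hmemB b, hbr2, hformb, hqm, hqmp]
          simp only [Finset.mem_insert, Finset.mem_range, hbm1, hbm1p, false_or]
          omega
        · have hbm1 : ¬ b = m₁ := fun h => hbr1 (by rw [h, hm1mod])
          have hbm1p : ¬ b = m₁ + p := fun h => hbr1 (by rw [h, hm1pmod])
          have hbm2 : ¬ b = m₂ := fun h => hbr2 (by rw [h, hm2mod])
          have hbm2p : ¬ b = m₂ + p := fun h => hbr2 (by rw [h, hm2pmod])
          rw [hmem0 (b % p) hbp (hrest _ hbp hbr1 hbr2) b rfl]
          simp [hbm1, hbm1p, hbm2, hbm2p]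

end AuxDev4

/-- the partitions `⟨i,j⟩` (`0 ≤ i < j ≤ p−1`), `⟨i⟩` and `⟨i²⟩`
(`0 ≤ i ≤ p−1`) are pairwise distinct and are precisely the partitions of
`|γ| + 2p` with `p`-core `γ`. -/
theorem stmt1 (p : ℕ) (hp : p.Prime) (hodd : Odd p)
    (γ : PartitionNat) (hγ : IsCore p γ)
    (N : ℕ) (hN : p ∣ N) (hNlen : γ.len + 2 * p ≤ N)
    (ρ : ℕ → ℕ) (hρ : IsRho p N γ ρ) :
    ((∀ i j k l, i < j → j < p → k < l → l < p →
        pairBeta p (betaSet N γ) ρ i j = pairBeta p (betaSet N γ) ρ k l → i = k ∧ j = l) ∧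
     (∀ i k, i < p → k < p →
        oneBeta p (betaSet N γ) ρ i = oneBeta p (betaSet N γ) ρ k → i = k) ∧
     (∀ i k, i < p → k < p →
        sqBeta p (betaSet N γ) ρ i = sqBeta p (betaSet N γ) ρ k → i = k) ∧
     (∀ i j k, i < j → j < p → k < p →
        pairBeta p (betaSet N γ) ρ i j ≠ oneBeta p (betaSet N γ) ρ k) ∧
     (∀ i j k, i < j → j < p → k < p →
        pairBeta p (betaSet N γ) ρ i j ≠ sqBeta p (betaSet N γ) ρ k) ∧
     (∀ i k, i < p → k < p →
        oneBeta p (betaSet N γ) ρ i ≠ sqBeta p (betaSet N γ) ρ k)) ∧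
    (∀ lam : PartitionNat,
      InBlock p 2 γ lam ↔
        (lam.len ≤ N ∧
          ((∃ i j, i < j ∧ j < p ∧ betaSet N lam = pairBeta p (betaSet N γ) ρ i j) ∨
           (∃ i, i < p ∧ betaSet N lam = oneBeta p (betaSet N γ) ρ i) ∨
           (∃ i, i < p ∧ betaSet N lam = sqBeta p (betaSet N γ) ρ i)))) := by
  classical
  obtain ⟨hρmono, hρmm, hρsurj⟩ := hρ
  have hp2 : 2 ≤ p := hp.two_le
  have hp0 : 0 < p := by omega
  set B := betaSet N γ with hB
  have hlenγ : γ.len ≤ N := by omega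
  have hflushN : ∀ b ∈ B, p ≤ b → b - p ∈ B :=
    fun b hb hpb => PartitionNat.core_flush hp0 hγ hlenγ hb hpb
  have hsmallN : ∀ k < 2 * p, k ∈ B :=
    fun k hk => PartitionNat.small_mem_betaSet hlenγ (by omega)
  have hρmem : ∀ i, i < p → ρ i ∈ B := fun i hi => (hρmm i hi).1
  have hρmax : ∀ i, i < p → ∀ b ∈ B, b % p = ρ i % p → b ≤ ρ i :=
    fun i hi => (hρmm i hi).2
  have hρinj : ∀ i, i < p → ∀ j, j < p → ρ i = ρ j → i = j := by
    intro i hi j hj h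
    rcases lt_trichotomy i j with hij | hij | hij
    · have := hρmono i j hij hj; omega
    · exact hij
    · have := hρmono j i hij hi; omega
  have hρge : ∀ i, i < p → p ≤ ρ i := by
    intro i hi
    have hmlt : ρ i % p < p := Nat.mod_lt _ hp0
    have h1 : ρ i % p + p ∈ B := hsmallN _ (by omega)
    have hm : (ρ i % p + p) % p = ρ i % p := by
      rw [Nat.add_mod_right, Nat.mod_eq_of_lt hmlt]
    have h2 := hρmax i hi _ h1 hm
    omega
  have hρmodinj : ∀ i, i < p → ∀ j, j < p → ρ i % p = ρ j % p → i = j := by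
    intro i hi j hj h
    have h1 := hρmax i hi _ (hρmem j hj) h.symm
    have h2 := hρmax j hj _ (hρmem i hi) h
    exact hρinj i hi j hj (by omega)
  have hρsubp : ∀ i, i < p → ρ i - p ∈ B := fun i hi => hflushN _ (hρmem i hi) (hρge i hi)
  have hρp_nmem : ∀ i, i < p → ρ i + p ∉ B := by
    intro i hi h
    have := hρmax i hi _ h (Nat.add_mod_right _ _)
    omega
  have hmod2p : ∀ x : ℕ, (x + 2 * p) % p = x % p := by
    intro x
    have e : x + 2 * p = x + p + p := by omega
    rw [e, Nat.add_mod_right, Nat.add_mod_right]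
  have hρ2p_nmem : ∀ i, i < p → ρ i + 2 * p ∉ B := by
    intro i hi h
    have := hρmax i hi _ h (hmod2p (ρ i))
    omega
  have hρmodeq : ∀ i, i < p → (ρ i - p) % p = ρ i % p := by
    intro i hi
    have h := hρge i hi
    conv_rhs => rw [(by omega : ρ i = ρ i - p + p)]
    rw [Nat.add_mod_right]
  -- difference computations
  have hpair_sdiff : ∀ i, i < p → ∀ j, j < p → i ≠ j →
      B \ pairBeta p B ρ i j = {ρ i, ρ j} := by
    intro i hi j hj hij
    have h1 : ρ i ∈ B := hρmem i hi
    have h2 : ρ j ∈ B := hρmem j hj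
    have h3 : ρ i ≠ ρ i + p := by omega
    have h4 : ρ i ≠ ρ j + p := fun h => hij (hρmodinj i hi j hj (by rw [h, Nat.add_mod_right]))
    have h5' : ρ j ≠ ρ i + p := fun h => hij ((hρmodinj j hj i hi (by rw [h, Nat.add_mod_right])).symm)
    have h6 : ρ j ≠ ρ j + p := by omega
    ext x
    simp only [pairBeta, Finset.mem_sdiff, Finset.mem_union, Finset.mem_insert,
      Finset.mem_singleton]
    constructor
    · rintro ⟨hxB, hx⟩
      by_contra hno
      push_neg at hno
      exact hx (Or.inl ⟨hxB, fun hh => by tauto⟩)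
    · rintro (rfl | rfl)
      · refine ⟨h1, ?_⟩
        rintro ((⟨_, hc⟩) | (hc | hc))
        · exact hc (Or.inl rfl)
        · exact h3 hc
        · exact h4 hc
      · refine ⟨h2, ?_⟩
        rintro ((⟨_, hc⟩) | (hc | hc))
        · exact hc (Or.inr rfl)
        · exact h5' hc
        · exact h6 hc
  have hone_sdiff : ∀ i, i < p → B \ oneBeta p B ρ i = {ρ i} := by
    intro i hi
    have h1 : ρ i ∈ B := hρmem i hi
    have h3 : ρ i ≠ ρ i + 2 * p := by omega
    ext x
    simp only [oneBeta, Finset.mem_sdiff, Finset.mem_union, Finset.mem_singleton]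
    constructor
    · rintro ⟨hxB, hx⟩
      by_contra hno
      exact hx (Or.inl ⟨hxB, hno⟩)
    · rintro rfl
      refine ⟨h1, ?_⟩
      rintro ((⟨_, hc⟩) | hc)
      · exact hc rfl
      · exact h3 hc
  have hsq_sdiff : ∀ i, i < p → B \ sqBeta p B ρ i = {ρ i - p} := by
    intro i hi
    have h1 : ρ i - p ∈ B := hρsubp i hi
    have hge := hρge i hi
    have h3 : ρ i - p ≠ ρ i + p := by omega
    ext x
    simp only [sqBeta, Finset.mem_sdiff, Finset.mem_union, Finset.mem_singleton]
    constructor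
    · rintro ⟨hxB, hx⟩
      by_contra hno
      exact hx (Or.inl ⟨hxB, hno⟩)
    · rintro rfl
      refine ⟨h1, ?_⟩
      rintro ((⟨_, hc⟩) | hc)
      · exact hc rfl
      · exact h3 hc
  constructor
  · refine ⟨?_, ?_, ?_, ?_, ?_, ?_⟩
    · -- pair vs pair
      intro i j k l hij hjp hkl hlp h
      have hi : i < p := by omega
      have hk : k < p := by omega
      have hs1 := hpair_sdiff i hi j hjp (by omega)
      have hs2 := hpair_sdiff k hk l hlp (by omega)
      rw [h] at hs1
      have heq : ({ρ i, ρ j} : Finset ℕ) = {ρ k, ρ l} := hs1.symm.trans hs2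
      have hm1 : ρ i = ρ k ∨ ρ i = ρ l := by
        have : ρ i ∈ ({ρ k, ρ l} : Finset ℕ) := by
          rw [← heq]; simp
        simpa using this
      have hm2 : ρ j = ρ k ∨ ρ j = ρ l := by
        have : ρ j ∈ ({ρ k, ρ l} : Finset ℕ) := by
          rw [← heq]; simp
        simpa using this
      rcases hm1 with h1 | h1 <;> rcases hm2 with h2 | h2
      · have := hρinj i hi k hk h1
        have := hρinj j hjp k hk h2
        omega
      · exact ⟨hρinj i hi k hk h1, hρinj j hjp l hlp h2⟩
      · have e1 := hρinj i hi l hlp h1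
        have e2 := hρinj j hjp k hk h2
        omega
      · have := hρinj i hi l hlp h1
        have := hρinj j hjp l hlp h2
        omega
    · -- one vs one
      intro i k hi hk h
      have hs1 := hone_sdiff i hi
      have hs2 := hone_sdiff k hk
      rw [h] at hs1
      have heq : ({ρ i} : Finset ℕ) = {ρ k} := hs1.symm.trans hs2
      exact hρinj i hi k hk (Finset.singleton_injective heq)
    · -- sq vs sq
      intro i k hi hk h
      have hs1 := hsq_sdiff i hi
      have hs2 := hsq_sdiff k hk
      rw [h] at hs1
      have heq := Finset.singleton_injective (hs1.symm.trans hs2)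
      have := hρge i hi
      have := hρge k hk
      exact hρinj i hi k hk (by omega)
    · -- pair vs one
      intro i j k hij hjp hk h
      have hi : i < p := by omega
      have hs1 := hpair_sdiff i hi j hjp (by omega)
      have hs2 := hone_sdiff k hk
      rw [h] at hs1
      have heq : ({ρ i, ρ j} : Finset ℕ) = {ρ k} := hs1.symm.trans hs2
      have hm1 : ρ i = ρ k := by
        have : ρ i ∈ ({ρ k} : Finset ℕ) := by rw [← heq]; simp
        simpa using this
      have hm2 : ρ j = ρ k := by
        have : ρ j ∈ ({ρ k} : Finset ℕ) := by rw [← heq]; simp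
        simpa using this
      have := hρinj i hi j hjp (hm1.trans hm2.symm)
      omega
    · -- pair vs sq
      intro i j k hij hjp hk h
      have hi : i < p := by omega
      have hs1 := hpair_sdiff i hi j hjp (by omega)
      have hs2 := hsq_sdiff k hk
      rw [h] at hs1
      have heq : ({ρ i, ρ j} : Finset ℕ) = {ρ k - p} := hs1.symm.trans hs2
      have hm1 : ρ i = ρ k - p := by
        have : ρ i ∈ ({ρ k - p} : Finset ℕ) := by rw [← heq]; simp
        simpa using this
      have hm2 : ρ j = ρ k - p := by
        have : ρ j ∈ ({ρ k - p} : Finset ℕ) := by rw [← heq]; simp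
        simpa using this
      have := hρinj i hi j hjp (hm1.trans hm2.symm)
      omega
    · -- one vs sq
      intro i k hi hk h
      have hs1 := hone_sdiff i hi
      have hs2 := hsq_sdiff k hk
      rw [h] at hs1
      have heq := Finset.singleton_injective (hs1.symm.trans hs2)
      have hmk : ρ i % p = ρ k % p := by rw [heq, hρmodeq k hk]
      have hik : i = k := hρmodinj i hi k hk hmk
      rw [hik] at heq
      have := hρge k hk
      omega
  · intro lam
    have hfinish : lam.len ≤ N →
        (∀ r, ((betaSet N lam).filter fun b => b % p = r).card
          = (B.filter fun b => b % p = r).card) →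
        (∑ b ∈ betaSet N lam, b = ∑ b ∈ B, b + 2 * p) → InBlock p 2 γ lam := by
      intro hlenlam hc hs
      constructor
      · have h1 := PartitionNat.sum_betaSet (μ := lam) (M := N) hlenlam
        have h2 := PartitionNat.sum_betaSet (μ := γ) (M := N) hlenγ
        rw [h1] at hs
        rw [hB, h2] at hs
        omega
      · exact ⟨hγ, N, hlenlam, hlenγ, hc⟩
    constructor
    · -- forward
      intro hblk
      obtain ⟨hsize, -, N', hlN', hgN', hcnt'⟩ := hblk
      set M := max N N' with hM
      have hMN : N ≤ M := le_max_left _ _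
      have hMN' : N' ≤ M := le_max_right _ _
      have hcntM : ∀ r, ((betaSet M lam).filter fun b => b % p = r).card
          = ((betaSet M γ).filter fun b => b % p = r).card := by
        have h1 := cnt_up lam γ (by omega : 1 < p) hlN' hgN' hcnt' (M - N')
        rwa [Nat.add_sub_cancel' hMN'] at h1
      have hlenγM : γ.len ≤ M := by omega
      have hlenlamM : lam.len ≤ M := by omega
      have hflushM : ∀ b ∈ betaSet M γ, p ≤ b → b - p ∈ betaSet M γ :=
        fun b hb hpb => PartitionNat.core_flush hp0 hγ hlenγM hb hpb
      have hsmallM : ∀ k < 2 * p, k ∈ betaSet M γ :=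
        fun k hk => PartitionNat.small_mem_betaSet hlenγM (by omega)
      have hsumM : ∑ b ∈ betaSet M lam, b = ∑ b ∈ betaSet M γ, b + 2 * p := by
        have h1 := PartitionNat.sum_betaSet (μ := lam) (M := M) hlenlamM
        have h2 := PartitionNat.sum_betaSet (μ := γ) (M := M) hlenγM
        rw [h1, h2, hsize]
        omega
      have hclsM := main_classify hp2 hflushM hsmallM hcntM hsumM
      have hlenlam : lam.len ≤ N := by
        have hsb : ∀ k, k < M - (γ.len + 2 * p) → k ∈ betaSet M lam := by
          intro k hk
          apply hclsM.1
          exact PartitionNat.small_mem_betaSet hlenγM (by omega)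
        have hll := len_le_of_small (μ := lam) (M := M) hlenlamM
          (K := M - (γ.len + 2 * p)) (by omega) hsb
        omega
      refine ⟨hlenlam, ?_⟩
      have hcntN : ∀ r, ((betaSet N lam).filter fun b => b % p = r).card
          = ((betaSet N γ).filter fun b => b % p = r).card := by
        apply cnt_down lam γ (by omega : 1 < p) hlenlam hlenγ (M - N)
        rwa [Nat.add_sub_cancel' hMN]
      have hsumN : ∑ b ∈ betaSet N lam, b = ∑ b ∈ B, b + 2 * p := by
        have h1 := PartitionNat.sum_betaSet (μ := lam) (M := N) hlenlam
        have h2 := PartitionNat.sum_betaSet (μ := γ) (M := N) hlenγ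
        rw [h1, hB, h2, hsize]
        omega
      have hclsN := main_classify hp2 hflushN hsmallN hcntN hsumN
      obtain ⟨-, m₁, m₂, hm1B, hm2B, hmax1, hmax2, hforms⟩ := hclsN
      have hfind : ∀ m, m ∈ B → (∀ b ∈ B, b % p = m % p → b ≤ m) → ∃ i, i < p ∧ ρ i = m := by
        intro m hmB hmax
        obtain ⟨i, hi, hir⟩ := hρsurj (m % p) (Nat.mod_lt _ hp0)
        refine ⟨i, hi, ?_⟩
        have h1 := hρmax i hi m hmB hir.symm
        have h2 := hmax (ρ i) (hρmem i hi) hir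
        omega
      rcases hforms with ⟨hmod, hBeq⟩ | ⟨heqm, hBeq⟩ | ⟨heqm, hpm, hBeq⟩
      · obtain ⟨i, hi, hieq⟩ := hfind m₁ hm1B hmax1
        obtain ⟨j, hj, hjeq⟩ := hfind m₂ hm2B hmax2
        left
        rcases Nat.lt_or_ge i j with hij | hij
        · refine ⟨i, j, hij, hj, ?_⟩
          rw [hBeq, pairBeta, hieq, hjeq]
        · have hijne : i ≠ j := fun h => hmod (by rw [← hieq, ← hjeq, h])
          refine ⟨j, i, by omega, hi, ?_⟩
          rw [hBeq, pairBeta, hjeq, hieq]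
          rw [Finset.pair_comm m₂ m₁, Finset.pair_comm (m₂ + p) (m₁ + p)]
      · obtain ⟨i, hi, hieq⟩ := hfind m₁ hm1B hmax1
        right; left
        exact ⟨i, hi, by rw [hBeq, oneBeta, hieq]⟩
      · obtain ⟨i, hi, hieq⟩ := hfind m₁ hm1B hmax1
        right; right
        exact ⟨i, hi, by rw [hBeq, sqBeta, hieq]⟩
    · -- reverse
      rintro ⟨hlenlam, hcase⟩
      rcases hcase with ⟨i, j, hij, hjp, hbeta⟩ | ⟨i, hip, hbeta⟩ | ⟨i, hip, hbeta⟩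
      · -- pair
        have hi : i < p := by omega
        have hjnei : ρ j ≠ ρ i := fun h => by
          have := hρinj j hjp i hi h; omega
        have hne_jp : ρ j ≠ ρ i + p := fun h => by
          have := hρmodinj j hjp i hi (by rw [h, Nat.add_mod_right]); omega
        have hne_jpp : ρ j + p ≠ ρ i + p := fun h => by
          have := hρinj j hjp i hi (by omega); omega
        have hdecomp : pairBeta p B ρ i j
            = (((B \ {ρ i}) ∪ {ρ i + p}) \ {ρ j}) ∪ {ρ j + p} := by
          ext x
          simp only [pairBeta, Finset.mem_union, Finset.mem_sdiff, Finset.mem_insert,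
            Finset.mem_singleton]
          constructor
          · rintro (⟨hxB, hx⟩ | (rfl | rfl))
            · push_neg at hx
              exact Or.inl ⟨Or.inl ⟨hxB, hx.1⟩, hx.2⟩
            · exact Or.inl ⟨Or.inr rfl, fun hh => hne_jp hh.symm⟩
            · exact Or.inr rfl
          · rintro (⟨(⟨hxB, hx1⟩ | rfl), hx2⟩ | rfl)
            · exact Or.inl ⟨hxB, fun hc => hc.elim hx1 hx2⟩
            · exact Or.inr (Or.inl rfl)
            · exact Or.inr (Or.inr rfl)
        have hmv1 : ρ i % p = (ρ i + p) % p := (Nat.add_mod_right _ _).symm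
        have hjB1 : ρ j ∈ (B \ {ρ i}) ∪ {ρ i + p} :=
          Finset.mem_union_left _ (Finset.mem_sdiff.mpr ⟨hρmem j hjp, by simpa using hjnei⟩)
        have hjpB1 : ρ j + p ∉ (B \ {ρ i}) ∪ {ρ i + p} := by
          intro h
          rcases Finset.mem_union.mp h with h1 | h1
          · exact hρp_nmem j hjp (Finset.mem_sdiff.mp h1).1
          · exact hne_jpp (Finset.mem_singleton.mp h1)
        have hmv2 : ρ j % p = (ρ j + p) % p := (Nat.add_mod_right _ _).symm
        apply hfinish hlenlam
        · intro r
          rw [hbeta, hdecomp, move_cnt hmv2 hjB1 hjpB1 r, move_cnt hmv1 (hρmem i hi)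
            (hρp_nmem i hi) r]
        · rw [hbeta, hdecomp]
          have hs1 := move_sum (hρmem i hi) (hρp_nmem i hi)
          have hs2 := move_sum hjB1 hjpB1
          omega
      · -- one
        have hmv : ρ i % p = (ρ i + 2 * p) % p := (hmod2p (ρ i)).symm
        apply hfinish hlenlam
        · intro r
          rw [hbeta, oneBeta, move_cnt hmv (hρmem i hip) (hρ2p_nmem i hip) r]
        · rw [hbeta, oneBeta]
          have hs1 := move_sum (hρmem i hip) (hρ2p_nmem i hip)
          omega
      · -- sq
        have hge := hρge i hip
        have hmv : (ρ i - p) % p = (ρ i + p) % p := by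
          rw [hρmodeq i hip, Nat.add_mod_right]
        apply hfinish hlenlam
        · intro r
          rw [hbeta, sqBeta, move_cnt hmv (hρsubp i hip) (hρp_nmem i hip) r]
        · rw [hbeta, sqBeta]
          have hs1 := move_sum (hρsubp i hip) (hρp_nmem i hip)
          omega


end ArxivW2
end

section
/- Let p be an odd prime and let γ be a self-conjugate p-core, with sorted lowest-bead positions ρ_0 < ρ_1 < ⋯ < ρ_{p−1} of its abacus as defined. Then for every 0 ≤ i ≤ p−1, (ρ_i mod p) + (ρ_{p−1−i} mod p) = p − 1. -/
namespace ArxivW2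

open PartitionNat

section Aux

variable {p N : ℕ} {γ : PartitionNat}

lemma conj_iff (μ : PartitionNat) (i j : ℕ) : j + 1 ≤ μ.part i ↔ i + 1 ≤ μ.conj j := by
  have hfin : {k : ℕ | j + 1 ≤ μ.part k}.Finite := μ.finite_support.subset fun a ha => by
    simp only [Function.mem_support]
    have : j + 1 ≤ μ.part a := ha
    omega
  constructor
  · intro h
    have hsub : Set.Iic i ⊆ {k : ℕ | j + 1 ≤ μ.part k} := fun a ha =>
      le_trans h (μ.antitone ha)
    have hcard := Set.ncard_le_ncard hsub hfin
    have hIic : (Set.Iic i).ncard = i + 1 := by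
      rw [← Finset.coe_Iic, Set.ncard_coe_finset, Nat.card_Iic]
    unfold PartitionNat.conj
    omega
  · intro h
    by_contra hc
    have hsub : {k : ℕ | j + 1 ≤ μ.part k} ⊆ Set.Iio i := fun a ha => by
      by_contra ha2
      simp only [Set.mem_Iio, not_lt] at ha2
      exact hc (le_trans (ha : j + 1 ≤ μ.part a) (μ.antitone ha2))
    have hcard := Set.ncard_le_ncard hsub (Set.finite_Iio i)
    have hIio : (Set.Iio i).ncard = i := by
      rw [← Finset.coe_Iio, Set.ncard_coe_finset, Nat.card_Iio]
    unfold PartitionNat.conj at h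
    omega

lemma sc_iff (hsc : SelfConj γ) (i j : ℕ) : j + 1 ≤ γ.part i ↔ i + 1 ≤ γ.part j := by
  rw [conj_iff, ← hsc j]

lemma conj_zero (μ : PartitionNat) : μ.conj 0 = μ.len := by
  unfold PartitionNat.conj PartitionNat.len
  congr 1
  ext k
  simp only [Set.mem_setOf_eq, Function.mem_support]
  omega

lemma part_le_len (hsc : SelfConj γ) (i : ℕ) : γ.part i ≤ γ.len := by
  have h1 : γ.part i ≤ γ.part 0 := γ.antitone (Nat.zero_le i)
  have h2 : γ.part 0 = γ.conj 0 := hsc 0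
  have h3 : γ.conj 0 = γ.len := conj_zero γ
  omega

lemma mem_betaSet {b : ℕ} : b ∈ betaSet N γ ↔ ∃ i < N, γ.part i + (N - 1 - i) = b := by
  simp [betaSet]

lemma betaSet_lt (hsc : SelfConj γ) (hlen : γ.len ≤ N) {b : ℕ} (hb : b ∈ betaSet N γ) :
    b < 2 * N := by
  obtain ⟨i, hi, hieq⟩ := mem_betaSet.mp hb
  have := part_le_len hsc i
  omega

lemma betaSet_card : (betaSet N γ).card = N := by
  have hinj : Set.InjOn (fun i => γ.part i + (N - 1 - i)) (Finset.range N) := by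
    intro i hi k hk hik
    simp only [Finset.coe_range, Set.mem_Iio] at hi hk
    simp only at hik
    rcases Nat.lt_trichotomy i k with h | h | h
    · have := γ.antitone h.le; omega
    · exact h
    · have := γ.antitone h.le; omega
  rw [betaSet, Finset.card_image_of_injOn hinj, Finset.card_range]

lemma reflect (hsc : SelfConj γ) (hlen : γ.len ≤ N) {b : ℕ}
    (hb : b ∈ betaSet N γ) (hb2 : 2 * N - 1 - b ∈ betaSet N γ) : False := by
  obtain ⟨i, hi, hieq⟩ := mem_betaSet.mp hb
  obtain ⟨k, hk, hkeq⟩ := mem_betaSet.mp hb2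
  have h1 : γ.part i ≤ γ.len := part_le_len hsc i
  have h2 : γ.part k ≤ γ.len := part_le_len hsc k
  have heq : γ.part i + γ.part k = i + k + 1 := by omega
  by_cases h : k + 1 ≤ γ.part i
  · have := (sc_iff hsc i k).mp h; omega
  · have h2' : ¬ (i + 1 ≤ γ.part k) := fun hh => h ((sc_iff hsc k i).mp hh)
    omega

lemma mem_or_reflect (hsc : SelfConj γ) (hlen : γ.len ≤ N) {x : ℕ} (hx : x < 2 * N) :
    x ∈ betaSet N γ ∨ 2 * N - 1 - x ∈ betaSet N γ := by
  set B := betaSet N γ with hB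
  set D := B ∪ B.image (fun b => 2 * N - 1 - b) with hD
  have hsub : D ⊆ Finset.range (2 * N) := by
    intro a ha
    rw [Finset.mem_range]
    rcases Finset.mem_union.mp ha with h | h
    · exact betaSet_lt hsc hlen h
    · obtain ⟨b, hb, rfl⟩ := Finset.mem_image.mp h
      have := betaSet_lt hsc hlen hb
      omega
  have hdisj : Disjoint B (B.image (fun b => 2 * N - 1 - b)) := by
    rw [Finset.disjoint_left]
    intro a ha hima
    obtain ⟨b, hb, hba⟩ := Finset.mem_image.mp hima
    have hblt := betaSet_lt hsc hlen hb
    have hab : 2 * N - 1 - a = b := by omega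
    exact reflect hsc hlen ha (by rw [hab]; exact hb)
  have hcard : D.card = 2 * N := by
    have hinj : Set.InjOn (fun b => 2 * N - 1 - b) (B : Set ℕ) := by
      intro a ha b hb hab
      have h1 := betaSet_lt hsc hlen (Finset.mem_coe.mp ha)
      have h2 := betaSet_lt hsc hlen (Finset.mem_coe.mp hb)
      simp only at hab
      omega
    rw [hD, Finset.card_union_of_disjoint hdisj, Finset.card_image_of_injOn hinj,
      betaSet_card]
    omega
  have hDeq : D = Finset.range (2 * N) :=
    Finset.eq_of_subset_of_card_le hsub (by rw [hcard, Finset.card_range])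
  have hxD : x ∈ D := hDeq ▸ Finset.mem_range.mpr hx
  rcases Finset.mem_union.mp hxD with h | h
  · exact Or.inl h
  · obtain ⟨b, hb, hbx⟩ := Finset.mem_image.mp h
    have := betaSet_lt hsc hlen hb
    right
    have hxb : 2 * N - 1 - x = b := by omega
    rw [hxb]
    exact hb

lemma core_step (hp0 : 0 < p) (hγ : IsCore p γ) (hsc : SelfConj γ) (hlen : γ.len ≤ N)
    {b : ℕ} (hb : b ∈ betaSet N γ) (hpb : p ≤ b) : b - p ∈ betaSet N γ := by
  by_contra hc
  obtain ⟨i, hi, hieq⟩ := mem_betaSet.mp hb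
  have hblt : b < 2 * N := betaSet_lt hsc hlen hb
  have hrefl := mem_or_reflect hsc hlen (x := b - p) (by omega)
  have hkmem : 2 * N - 1 - (b - p) ∈ betaSet N γ := hrefl.resolve_left hc
  obtain ⟨k, hkN, hkeq⟩ := mem_betaSet.mp hkmem
  have hpartk : γ.part k ≤ N := le_trans (part_le_len hsc k) hlen
  have hparti : γ.part i ≤ N := le_trans (part_le_len hsc i) hlen
  have heq : γ.part i + γ.part k = p + i + k + 1 := by omega
  have hnode : k < γ.part i := by
    by_contra hkp
    have h2 : ¬ (i + 1 ≤ γ.part k) := fun hh =>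
      absurd ((sc_iff hsc k i).mp hh) (by omega)
    omega
  have hhook : γ.hook i k = p := by
    unfold PartitionNat.hook
    rw [← hsc k]
    omega
  exact hγ i k hnode (by rw [hhook])

lemma runner_full (hp0 : 0 < p) (hγ : IsCore p γ) (hsc : SelfConj γ) (hlen : γ.len ≤ N) :
    ∀ b ∈ betaSet N γ, ∀ c, c ≤ b → c % p = b % p → c ∈ betaSet N γ := by
  intro b
  induction b using Nat.strong_induction_on with
  | _ b ih =>
    intro hb c hcb hmod
    rcases eq_or_lt_of_le hcb with rfl | hlt
    · exact hb
    · have hd : p ∣ b - c := (Nat.modEq_iff_dvd' hcb).mp hmod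
      have hple : p ≤ b - c := Nat.le_of_dvd (by omega) hd
      have hb' : b - p ∈ betaSet N γ := core_step hp0 hγ hsc hlen hb (by omega)
      refine ih (b - p) (by omega) hb' c (by omega) ?_
      have hmm : (b - p) % p = b % p := by
        conv_rhs => rw [show b = (b - p) + p by omega]
        rw [Nat.add_mod_right]
      rw [hmm]
      exact hmod

lemma strictAnti_eq {p : ℕ} (f : ℕ → ℕ) (hf : ∀ i, i < p → f i < p)
    (hanti : ∀ i j, i < j → j < p → f j < f i) :
    ∀ i, i < p → f i = p - 1 - i := by
  have step : ∀ k i, i + k < p → f (i + k) + k ≤ f i := by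
    intro k
    induction k with
    | zero => intro i _; show f i + 0 <= f i; omega
    | succ k ih =>
      intro i hik
      have h1 := ih i (by omega)
      have h2 := hanti (i + k) (i + k + 1) (by omega) (by omega)
      show f (i + k + 1) + (k + 1) ≤ f i
      omega
  intro i hi
  have h1 := step i 0 (by omega)
  have h0 := hf 0 (by omega)
  have hq : i + (p - 1 - i) = p - 1 := by omega
  have h2 := step (p - 1 - i) i (by omega)
  rw [hq] at h2
  simp only [Nat.zero_add] at h1
  omega

end Aux

/-- for a self-conjugate `p`-core, the residues of the sorted
lowest-bead positions satisfy `(ρ_i mod p) + (ρ_{p−1−i} mod p) = p − 1`. -/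
theorem stmt6 (p : ℕ) (hp : p.Prime) (hodd : Odd p)
    (γ : PartitionNat) (hγ : IsCore p γ) (hsc : SelfConj γ)
    (N : ℕ) (hN : p ∣ N) (hNlen : γ.len + 2 * p ≤ N)
    (ρ : ℕ → ℕ) (hρ : IsRho p N γ ρ) :
    ∀ i, i ≤ p - 1 → ρ i % p + ρ (p - 1 - i) % p = p - 1 := by
  obtain ⟨hinc, hmax, hsurj⟩ := hρ
  have hp0 : 0 < p := hp.pos
  have hp2 : 2 ≤ p := hp.two_le
  have hlen : γ.len ≤ N := by omega
  have hdvd2N : p ∣ 2 * N := hN.mul_left 2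
  have hrun : ∀ b ∈ betaSet N γ, ∀ c, c ≤ b → c % p = b % p → c ∈ betaSet N γ :=
    runner_full hp0 hγ hsc hlen
  have key : ∀ i, i < p → ρ i + p < 2 * N ∧
      ∃ j, j < p ∧ ρ j = 2 * N - 1 - p - ρ i ∧ ρ i % p + ρ j % p = p - 1 := by
    intro i hi
    obtain ⟨hm, hmmax⟩ := hmax i hi
    have hmlt : ρ i < 2 * N := betaSet_lt hsc hlen hm
    set m := ρ i with hmm
    have hstep2 : m + p < 2 * N := by
      by_contra hcon
      push_neg at hcon
      set x := 2 * N - 1 - m with hx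
      have hxp : x < p := by omega
      obtain ⟨j, hj, hjx⟩ := hsurj x hxp
      have hxle : x ≤ ρ j := by rw [← hjx]; exact Nat.mod_le _ _
      have hxmod : x % p = ρ j % p := by rw [Nat.mod_eq_of_lt hxp, hjx]
      have hxmem : x ∈ betaSet N γ := hrun (ρ j) (hmax j hj).1 x hxle hxmod
      exact reflect hsc hlen hm (by rw [hx] at hxmem; exact hxmem)
    have hnm : m + p ∉ betaSet N γ := fun hmem => by
      have := hmmax (m + p) hmem (Nat.add_mod_right m p)
      omega
    have hm' : 2 * N - 1 - (m + p) ∈ betaSet N γ :=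
      (mem_or_reflect hsc hlen hstep2).resolve_left hnm
    set m' := 2 * N - 1 - (m + p) with hm'def
    have hdm : p ∣ m + m' + 1 := by
      have h1 := Nat.dvd_sub hdvd2N (dvd_refl p)
      have h2 : 2 * N - p = m + m' + 1 := by omega
      rwa [h2] at h1
    have hres : m % p + m' % p = p - 1 := by
      have e1 : m % p + m' % p + 1 ≡ m + m' + 1 [MOD p] :=
        ((Nat.mod_modEq m p).add (Nat.mod_modEq m' p)).add_right 1
      have hd2 : p ∣ m % p + m' % p + 1 :=
        Nat.modEq_zero_iff_dvd.mp (e1.trans (Nat.modEq_zero_iff_dvd.mpr hdm))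
      obtain ⟨k, hk⟩ := hd2
      have hb1 : m % p < p := Nat.mod_lt _ hp0
      have hb2 : m' % p < p := Nat.mod_lt _ hp0
      rcases k with _ | _ | k
      · omega
      · omega
      · have : p * 2 ≤ p * (k + 1 + 1) := Nat.mul_le_mul_left p (by omega)
        omega
    have hm'max : ∀ b ∈ betaSet N γ, b % p = m' % p → b ≤ m' := by
      intro b hbB hbmod
      by_contra hcon
      push_neg at hcon
      have hblt : b < 2 * N := betaSet_lt hsc hlen hbB
      have hdbm : p ∣ b - m' := (Nat.modEq_iff_dvd' (le_of_lt hcon)).mp hbmod.symm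
      have hple : p ≤ b - m' := Nat.le_of_dvd (by omega) hdbm
      set z := 2 * N - 1 - b with hz
      have hzm : z ≤ m := by omega
      have hd3 : p ∣ z + m' + 1 := by
        have h1 := Nat.dvd_sub hdvd2N hdbm
        have h2 : 2 * N - (b - m') = z + m' + 1 := by omega
        rwa [h2] at h1
      have hzmod : z % p = m % p := by
        have hmz : p ∣ m - z := by
          have h1 := Nat.dvd_sub hdm hd3
          have h2 : (m + m' + 1) - (z + m' + 1) = m - z := by omega
          rwa [h2] at h1
        exact (Nat.modEq_iff_dvd' hzm).mpr hmz
      have hzB : z ∈ betaSet N γ := hrun m hm z hzm hzmod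
      exact reflect hsc hlen hbB (by rw [hz] at hzB; exact hzB)
    obtain ⟨j, hj, hjm⟩ := hsurj (m' % p) (Nat.mod_lt _ hp0)
    have hjmem := (hmax j hj).1
    have hjmax := (hmax j hj).2
    have hjeq : ρ j = m' :=
      le_antisymm (hm'max (ρ j) hjmem hjm) (hjmax m' hm' hjm.symm)
    refine ⟨hstep2, j, hj, by omega, ?_⟩
    rw [hjeq]
    exact hres
  have key2 : ∀ i, ∃ j, i < p →
      (j < p ∧ ρ j = 2 * N - 1 - p - ρ i ∧ ρ i % p + ρ j % p = p - 1) := by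
    intro i
    by_cases hi : i < p
    · obtain ⟨_, j, hj⟩ := key i hi
      exact ⟨j, fun _ => hj⟩
    · exact ⟨0, fun h => absurd h hi⟩
  choose f hf using key2
  have hanti : ∀ i j, i < j → j < p → f j < f i := by
    intro i j hij hjp
    have hip : i < p := by omega
    obtain ⟨hfi, hfieq, hfires⟩ := hf i hip
    obtain ⟨hfj, hfjeq, hfjres⟩ := hf j hjp
    have hρij : ρ i < ρ j := hinc i j hij hjp
    have hbndi : ρ i + p < 2 * N := (key i hip).1
    have hbndj : ρ j + p < 2 * N := (key j hjp).1
    have hlt : ρ (f j) < ρ (f i) := by omega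
    by_contra hcon
    push_neg at hcon
    rcases eq_or_lt_of_le hcon with heq | hlt2
    · rw [heq] at hlt; omega
    · exact absurd (hinc (f i) (f j) hlt2 hfj) (by omega)
  have hfeq := strictAnti_eq f (fun i hi => (hf i hi).1) hanti
  intro i hi
  have hip : i < p := by omega
  obtain ⟨hfi, hfieq, hfires⟩ := hf i hip
  rw [← hfeq i hip]
  exact hfires

end ArxivW2
end
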